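/- arXiv:2411.06195 — 4 statements merged into one kernel-verified Lean document; each statement's English description precedes it below -/
import Mathlib

section
/- Let α ∈ [0, 1/2) and define C_α = 2^{−α} Γ(1/2 − α)/√π. For every W > 0, if X_W ~ IG(1/W, 1), then E[X_W^α] ≤ C_α, and moreover E[X_W^α] → C_α as W → 0. -/
open MeasureTheory Set Filter

/-- Density of the inverse Gaussian distribution IG(μ, λ). -/
noncomputable def igPdf (μ lam x : ℝ) : ℝ :=
  Real.sqrt (lam / (2 * Real.pi * x ^ 3)) *
    Real.exp (-(lam * (x - μ) ^ 2) / (2 * μ ^ 2 * x))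

/-- The constant C_α = 2^{-α} Γ(1/2 - α)/√π. -/
noncomputable def Cconst (α : ℝ) : ℝ :=
  2 ^ (-α) * Real.Gamma (1 / 2 - α) / Real.sqrt Real.pi

namespace IGAux

open Real

lemma sq_quarter_le_exp {t : ℝ} (ht : 0 ≤ t) : t ^ 2 / 4 ≤ Real.exp t := by
  have h := Real.add_one_le_exp (t / 2)
  have h2 : Real.exp (t / 2) ^ 2 = Real.exp t := by
    rw [sq, ← Real.exp_add]; ring_nf
  nlinarith [Real.exp_pos (t / 2), sq_nonneg (t / 2)]

/-- Master integrability lemma. -/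
lemma int_master {c a b : ℝ} (hc1 : -2 ≤ c) (hc2 : c ≤ 0) (ha : 0 < a) (hb : 0 < b) :
    IntegrableOn (fun x : ℝ => x ^ c * Real.exp (-(a * x + b / x))) (Ioi 0) := by
  have hcont : ContinuousOn (fun x : ℝ => x ^ c * Real.exp (-(a * x + b / x))) (Ioi 0) := by
    refine ContinuousOn.mul
      (ContinuousOn.rpow_const continuousOn_id fun x hx => Or.inl (ne_of_gt hx)) ?_
    refine Real.continuous_exp.comp_continuousOn ?_
    refine ContinuousOn.neg (ContinuousOn.add (Continuous.continuousOn (by continuity)) ?_)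
    exact ContinuousOn.div continuousOn_const continuousOn_id fun x hx => ne_of_gt hx
  have hmeas : AEStronglyMeasurable (fun x : ℝ => x ^ c * Real.exp (-(a * x + b / x)))
      (volume.restrict (Ioi 0)) := hcont.aestronglyMeasurable measurableSet_Ioi
  have h1 : IntegrableOn (fun x : ℝ => x ^ c * Real.exp (-(a * x + b / x))) (Ioc 0 1) := by
    refine Integrable.mono' (g := fun _ => 4 / b ^ 2)
      (integrableOn_const measure_Ioc_lt_top.ne)
      (hmeas.mono_measure (Measure.restrict_mono Ioc_subset_Ioi_self le_rfl)) ?_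
    refine (ae_restrict_iff' measurableSet_Ioc).2 (Filter.Eventually.of_forall fun x hx => ?_)
    obtain ⟨hx0, hx1⟩ := hx
    have hxc : (0:ℝ) < x ^ c := Real.rpow_pos_of_pos hx0 c
    rw [Real.norm_eq_abs, abs_of_nonneg (by positivity)]
    have e1 : Real.exp (-(a * x + b / x)) ≤ Real.exp (-(b / x)) := by
      apply Real.exp_le_exp.2
      have : 0 < a * x := mul_pos ha hx0
      linarith
    have ht : 0 < b / x := div_pos hb hx0
    have e2 : Real.exp (-(b / x)) ≤ 4 * x ^ 2 / b ^ 2 := by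
      have h4 := sq_quarter_le_exp ht.le
      have h5 : (Real.exp (b / x))⁻¹ ≤ ((b / x) ^ 2 / 4)⁻¹ := by
        apply inv_anti₀ (by positivity) h4
      rw [Real.exp_neg]
      refine h5.trans (le_of_eq ?_)
      rw [div_pow, eq_div_iff (by positivity)]
      field_simp
    have hcx2 : x ^ c * x ^ 2 = x ^ (c + 2) := by
      rw [← Real.rpow_natCast x 2, ← Real.rpow_add hx0]
      norm_num
    calc x ^ c * Real.exp (-(a * x + b / x)) ≤ x ^ c * (4 * x ^ 2 / b ^ 2) :=
          mul_le_mul_of_nonneg_left (e1.trans e2) hxc.le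
      _ = 4 / b ^ 2 * (x ^ c * x ^ 2) := by ring
      _ ≤ 4 / b ^ 2 * 1 := by
          refine mul_le_mul_of_nonneg_left ?_ (by positivity)
          rw [hcx2]
          exact Real.rpow_le_one hx0.le hx1 (by linarith)
      _ = 4 / b ^ 2 := mul_one _
  have h2 : IntegrableOn (fun x : ℝ => x ^ c * Real.exp (-(a * x + b / x))) (Ioi 1) := by
    refine Integrable.mono' (exp_neg_integrableOn_Ioi 1 ha)
      (hmeas.mono_measure (Measure.restrict_mono (Ioi_subset_Ioi zero_le_one) le_rfl)) ?_
    refine (ae_restrict_iff' measurableSet_Ioi).2 (Filter.Eventually.of_forall fun x hx => ?_)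
    have hx1 : (1:ℝ) < x := hx
    have hx0 : (0:ℝ) < x := by linarith
    have hxc : (0:ℝ) < x ^ c := Real.rpow_pos_of_pos hx0 c
    rw [Real.norm_eq_abs, abs_of_nonneg (by positivity)]
    have e1 : Real.exp (-(a * x + b / x)) ≤ Real.exp (-(a * x)) := by
      apply Real.exp_le_exp.2
      have : 0 < b / x := div_pos hb hx0
      linarith
    calc x ^ c * Real.exp (-(a * x + b / x)) ≤ 1 * Real.exp (-(a * x)) := by
          refine mul_le_mul (Real.rpow_le_one_of_one_le_of_nonpos hx1.le hc2) e1
            (Real.exp_pos _).le zero_le_one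
      _ = Real.exp (-a * x) := by rw [one_mul, neg_mul]
  refine (h1.union h2).mono_set fun x hx => ?_
  rcases le_or_gt x 1 with h | h
  · exact Or.inl ⟨hx, h⟩
  · exact Or.inr h

lemma int_masterB {a : ℝ} (ha : 0 < a) :
    IntegrableOn (fun x : ℝ => (Real.sqrt x)⁻¹ * Real.exp (-(a * x + 1 / (2 * x)))) (Ioi 0) := by
  have h := int_master (c := -(1/2:ℝ)) (by norm_num) (by norm_num) ha one_half_pos
  refine h.congr_fun (fun x hx => ?_) measurableSet_Ioi
  have hx0 : (0:ℝ) < x := hx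
  beta_reduce
  rw [Real.rpow_neg hx0.le, ← Real.sqrt_eq_rpow, div_div]

lemma int_masterA {a : ℝ} (ha : 0 < a) :
    IntegrableOn (fun x : ℝ => (x * Real.sqrt x)⁻¹ * Real.exp (-(a * x + 1 / (2 * x)))) (Ioi 0) := by
  have h := int_master (c := -(3/2:ℝ)) (by norm_num) (by norm_num) ha one_half_pos
  refine h.congr_fun (fun x hx => ?_) measurableSet_Ioi
  have hx0 : (0:ℝ) < x := hx
  have h32 : x ^ ((3:ℝ)/2) = x * Real.sqrt x := by
    rw [show ((3:ℝ)/2) = 1 + 1/2 by norm_num, Real.rpow_add hx0, Real.rpow_one,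
      ← Real.sqrt_eq_rpow]
  beta_reduce
  rw [Real.rpow_neg hx0.le, h32, div_div]

/-- The `x ↦ 1/(2ax)` symmetry relating the two Glasser integrals. -/
lemma glasserA {a : ℝ} (ha : 0 < a) :
    ∫ x in Ioi (0:ℝ), (x * Real.sqrt x)⁻¹ * Real.exp (-(a * x + 1 / (2 * x)))
      = Real.sqrt (2 * a)
          * ∫ x in Ioi (0:ℝ), (Real.sqrt x)⁻¹ * Real.exp (-(a * x + 1 / (2 * x))) := by
  have h2a : (0:ℝ) < 2 * a := by positivity
  have himg : (fun x : ℝ => (2 * a * x)⁻¹) '' Ioi 0 = Ioi 0 := by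
    apply Subset.antisymm
    · rintro y ⟨x, hx, rfl⟩
      have hx0 : (0:ℝ) < x := hx
      refine mem_Ioi.mpr (inv_pos.2 ?_)
      positivity
    · intro y hy
      have hy0 : (0:ℝ) < y := hy
      refine ⟨(2 * a * y)⁻¹, mem_Ioi.mpr (inv_pos.2 (by positivity)), ?_⟩
      field_simp
  have hderiv : ∀ x ∈ Ioi (0:ℝ),
      HasDerivWithinAt (fun x : ℝ => (2 * a * x)⁻¹) (-(2 * a) / (2 * a * x) ^ 2) (Ioi 0) x := by
    intro x hx
    have hx0 : (0:ℝ) < x := hx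
    have h1 : HasDerivAt (fun y : ℝ => 2 * a * y) (2 * a) x := by
      simpa using (hasDerivAt_id x).const_mul (2 * a)
    have h2 := h1.inv (by positivity : 2 * a * x ≠ 0)
    exact h2.hasDerivWithinAt
  have hinj : InjOn (fun x : ℝ => (2 * a * x)⁻¹) (Ioi 0) := by
    intro x hx y hy hxy
    simp only [] at hxy
    have h1 : 2 * a * x = 2 * a * y := inv_injective hxy
    exact mul_left_cancel₀ (ne_of_gt h2a) h1
  have himage := integral_image_eq_integral_abs_deriv_smul measurableSet_Ioi hderiv hinj
      (fun y : ℝ => (y * Real.sqrt y)⁻¹ * Real.exp (-(a * y + 1 / (2 * y))))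
  rw [himg] at himage
  rw [himage, ← integral_const_mul]
  refine setIntegral_congr_fun measurableSet_Ioi fun x hx => ?_
  have hx0 : (0:ℝ) < x := hx
  have hexp : a * (2 * a * x)⁻¹ + 1 / (2 * (2 * a * x)⁻¹) = a * x + 1 / (2 * x) := by
    field_simp
    ring
  have hsx : Real.sqrt x * Real.sqrt x = x := Real.mul_self_sqrt hx0.le
  have hs2a : Real.sqrt (2 * a) * Real.sqrt (2 * a) = 2 * a := Real.mul_self_sqrt h2a.le
  have hsxpos : 0 < Real.sqrt x := Real.sqrt_pos.2 hx0
  have hs2apos : 0 < Real.sqrt (2 * a) := Real.sqrt_pos.2 h2a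
  simp only [smul_eq_mul]
  rw [hexp, Real.sqrt_inv, Real.sqrt_mul h2a.le]
  rw [abs_div, abs_neg, abs_of_pos h2a, abs_of_pos (by positivity : (0:ℝ) < (2*a*x)^2)]
  rw [mul_comm ((2*a*x)⁻¹) ((Real.sqrt (2*a) * Real.sqrt x)⁻¹)]
  field_simp
  ring_nf
  rw [Real.sq_sqrt hx0.le]

/-- Glasser-type integral. -/
lemma glasserB {a : ℝ} (ha : 0 < a) :
    ∫ x in Ioi (0:ℝ), (Real.sqrt x)⁻¹ * Real.exp (-(a * x + 1 / (2 * x)))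
      = Real.sqrt π / Real.sqrt a * Real.exp (-Real.sqrt (2 * a)) := by
  have h2a : (0:ℝ) < 2 * a := by positivity
  have hsa : 0 < Real.sqrt a := Real.sqrt_pos.2 ha
  have hs2 : 0 < Real.sqrt 2 := Real.sqrt_pos.2 two_pos
  have hsa2 : Real.sqrt (2 * a) = Real.sqrt 2 * Real.sqrt a := Real.sqrt_mul (by norm_num) a
  have hsqa : Real.sqrt a * Real.sqrt a = a := Real.mul_self_sqrt ha.le
  have hsq2 : Real.sqrt 2 * Real.sqrt 2 = 2 := Real.mul_self_sqrt (by norm_num)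
  set f : ℝ → ℝ := fun x => Real.sqrt a * Real.sqrt x - (Real.sqrt 2)⁻¹ * (Real.sqrt x)⁻¹
    with hf
  set f' : ℝ → ℝ := fun x =>
      Real.sqrt a * (1 / (2 * Real.sqrt x))
        - (Real.sqrt 2)⁻¹ * (-(1 / (2 * Real.sqrt x)) / Real.sqrt x ^ 2) with hf'
  have hderiv : ∀ x ∈ Ioi (0:ℝ), HasDerivWithinAt f (f' x) (Ioi 0) x := by
    intro x hx
    have hx0 : (0:ℝ) < x := hx
    have h1 : HasDerivAt Real.sqrt (1 / (2 * Real.sqrt x)) x :=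
      Real.hasDerivAt_sqrt (ne_of_gt hx0)
    have h2 := h1.inv (ne_of_gt (Real.sqrt_pos.2 hx0))
    exact ((h1.const_mul (Real.sqrt a)).sub (h2.const_mul (Real.sqrt 2)⁻¹)).hasDerivWithinAt
  have hf'eq : ∀ x : ℝ, 0 < x →
      f' x = Real.sqrt a * (1 / (2 * Real.sqrt x))
        + (Real.sqrt 2)⁻¹ * (1 / (2 * x * Real.sqrt x)) := by
    intro x hx0
    have hsx : 0 < Real.sqrt x := Real.sqrt_pos.2 hx0
    have hx' : Real.sqrt x ^ 2 = x := Real.sq_sqrt hx0.le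
    simp only [hf']
    rw [hx']
    field_simp
    ring
  have hf'pos : ∀ x : ℝ, 0 < x → 0 < f' x := by
    intro x hx0
    have hsx : 0 < Real.sqrt x := Real.sqrt_pos.2 hx0
    rw [hf'eq x hx0]
    positivity
  have hinj : InjOn f (Ioi 0) := by
    have hmono : StrictMonoOn f (Ioi 0) := by
      intro x hx y hy hxy
      have hx0 : (0:ℝ) < x := hx
      have hy0 : (0:ℝ) < y := hy
      have hsx : 0 < Real.sqrt x := Real.sqrt_pos.2 hx0
      have hsy : 0 < Real.sqrt y := Real.sqrt_pos.2 hy0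
      have hlt : Real.sqrt x < Real.sqrt y := Real.sqrt_lt_sqrt hx0.le hxy
      have h1 : Real.sqrt a * Real.sqrt x < Real.sqrt a * Real.sqrt y :=
        mul_lt_mul_of_pos_left hlt hsa
      have h2 : (Real.sqrt y)⁻¹ < (Real.sqrt x)⁻¹ := by
        rw [inv_lt_inv₀ hsy hsx]
        exact hlt
      have h3 : (Real.sqrt 2)⁻¹ * (Real.sqrt y)⁻¹ < (Real.sqrt 2)⁻¹ * (Real.sqrt x)⁻¹ :=
        mul_lt_mul_of_pos_left h2 (inv_pos.2 hs2)
      simp only [hf]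
      linarith
    exact hmono.injOn
  have himg : f '' Ioi 0 = univ := by
    rw [eq_univ_iff_forall]
    intro u
    have hd0 : (0:ℝ) ≤ u ^ 2 + 2 * Real.sqrt (2 * a) := by positivity
    set d := Real.sqrt (u ^ 2 + 2 * Real.sqrt (2 * a)) with hdd
    have hd2 : d ^ 2 = u ^ 2 + 2 * Real.sqrt (2 * a) := Real.sq_sqrt hd0
    have hdpos : 0 < d := Real.sqrt_pos.2 (by positivity)
    have habs : |u| < d := by
      nlinarith [sq_abs u, abs_nonneg u, Real.sqrt_pos.2 h2a]
    have hupd : 0 < u + d := by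
      rcases abs_lt.1 habs with ⟨h', _⟩
      linarith
    set y := (u + d) / (2 * Real.sqrt a) with hyy
    have hy0 : 0 < y := by positivity
    refine ⟨y ^ 2, mem_Ioi.mpr (by positivity), ?_⟩
    simp only [hf]
    rw [Real.sqrt_sq hy0.le, hyy]
    rw [hsa2] at hd2
    field_simp
    nlinarith [hd2, hsqa, hsq2]
  have hgauss : ∫ u : ℝ, Real.exp (-u ^ 2) = Real.sqrt π := by
    have h := integral_gaussian 1
    simp only [neg_mul, one_mul, div_one] at h
    exact h
  have himage := integral_image_eq_integral_abs_deriv_smul measurableSet_Ioi hderiv hinj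
      (fun u : ℝ => Real.exp (-u ^ 2))
  rw [himg, Measure.restrict_univ, hgauss] at himage
  simp only [smul_eq_mul] at himage
  have hptw : ∀ x ∈ Ioi (0:ℝ), |f' x| * Real.exp (-f x ^ 2)
      = Real.exp (Real.sqrt (2 * a))
          * (Real.sqrt a / 2 * ((Real.sqrt x)⁻¹ * Real.exp (-(a * x + 1 / (2 * x))))
            + (Real.sqrt 2)⁻¹ / 2
                * ((x * Real.sqrt x)⁻¹ * Real.exp (-(a * x + 1 / (2 * x))))) := by
    intro x hx
    have hx0 : (0:ℝ) < x := hx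
    have hsx : 0 < Real.sqrt x := Real.sqrt_pos.2 hx0
    have hsqx : Real.sqrt x * Real.sqrt x = x := Real.mul_self_sqrt hx0.le
    have hfsq : f x ^ 2 = a * x + 1 / (2 * x) - Real.sqrt (2 * a) := by
      simp only [hf]
      rw [hsa2]
      field_simp
      linear_combination (2*x*Real.sqrt a^2*Real.sqrt 2^2*(Real.sqrt x^2 + x)
          + (-(4*Real.sqrt a*Real.sqrt 2*x) - 2*a*x^2*Real.sqrt 2^2 - Real.sqrt 2^2
            + 2*Real.sqrt 2^3*Real.sqrt a*x)) * hsqx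
        + (2*Real.sqrt 2^2*x^3) * hsqa + (2*Real.sqrt 2*Real.sqrt a*x^2 - x) * hsq2
    have harg : -(a * x + 1 / (2 * x) - Real.sqrt (2 * a))
        = Real.sqrt (2 * a) + -(a * x + 1 / (2 * x)) := by ring
    rw [abs_of_pos (hf'pos x hx0), hf'eq x hx0, hfsq, harg, Real.exp_add]
    field_simp
  rw [setIntegral_congr_fun measurableSet_Ioi hptw, integral_const_mul,
    integral_add ((int_masterB ha).const_mul _) ((int_masterA ha).const_mul _),
    integral_const_mul, integral_const_mul, glasserA ha] at himage
  set B := ∫ x in Ioi (0:ℝ), (Real.sqrt x)⁻¹ * Real.exp (-(a * x + 1 / (2 * x))) with hB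
  have hcoef : Real.sqrt a / 2 * B + (Real.sqrt 2)⁻¹ / 2 * (Real.sqrt (2 * a) * B)
      = Real.sqrt a * B := by
    rw [hsa2]
    field_simp
    ring
  rw [hcoef] at himage
  rw [Real.exp_neg]
  rw [himage]
  field_simp

lemma gammaInner {α x : ℝ} (h1 : α < 1 / 2) (hx : 0 < x) :
    ∫ r in Ioi (0:ℝ), r ^ (-α) * Real.exp (-(x * r)) = Real.Gamma (1 - α) * x ^ (α - 1) := by
  have h := Real.integral_rpow_mul_exp_neg_mul_Ioi (show (0:ℝ) < 1 - α by linarith) hx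
  rw [show (1:ℝ) - α - 1 = -α by ring] at h
  rw [h, one_div, Real.inv_rpow hx.le, ← Real.rpow_neg hx.le, show -(1 - α) = α - 1 by ring]
  ring

lemma gammaInnerInt {α x : ℝ} (h0 : 0 ≤ α) (h1 : α < 1 / 2) (hx : 0 < x) :
    IntegrableOn (fun r : ℝ => r ^ (-α) * Real.exp (-(x * r))) (Ioi 0) := by
  have hcont : ContinuousOn (fun r : ℝ => r ^ (-α) * Real.exp (-(x * r))) (Ioi 0) := by
    refine ContinuousOn.mul
      (ContinuousOn.rpow_const continuousOn_id fun r hr => Or.inl (ne_of_gt hr)) ?_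
    exact (Real.continuous_exp.comp (by continuity)).continuousOn
  have hmeas : AEStronglyMeasurable (fun r : ℝ => r ^ (-α) * Real.exp (-(x * r)))
      (volume.restrict (Ioi 0)) := hcont.aestronglyMeasurable measurableSet_Ioi
  have hpart1 : IntegrableOn (fun r : ℝ => r ^ (-α) * Real.exp (-(x * r))) (Ioc 0 1) := by
    have hrint : IntegrableOn (fun r : ℝ => r ^ (-α)) (Ioc 0 1) := by
      have := intervalIntegral.intervalIntegrable_rpow' (a := 0) (b := 1) (r := -α) (by linarith)
      rwa [intervalIntegrable_iff_integrableOn_Ioc_of_le zero_le_one] at this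
    refine hrint.mono' (hmeas.mono_measure (Measure.restrict_mono Ioc_subset_Ioi_self le_rfl)) ?_
    refine (ae_restrict_iff' measurableSet_Ioc).2 (Filter.Eventually.of_forall fun r hr => ?_)
    obtain ⟨hr0, hr1⟩ := hr
    rw [Real.norm_eq_abs, abs_of_nonneg (by positivity)]
    have he : Real.exp (-(x * r)) ≤ 1 := Real.exp_le_one_iff.2 (by nlinarith)
    calc r ^ (-α) * Real.exp (-(x * r)) ≤ r ^ (-α) * 1 :=
          mul_le_mul_of_nonneg_left he (by positivity)
      _ = r ^ (-α) := mul_one _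
  have hpart2 : IntegrableOn (fun r : ℝ => r ^ (-α) * Real.exp (-(x * r))) (Ioi 1) := by
    refine (exp_neg_integrableOn_Ioi 1 hx).mono'
      (hmeas.mono_measure (Measure.restrict_mono (Ioi_subset_Ioi zero_le_one) le_rfl)) ?_
    refine (ae_restrict_iff' measurableSet_Ioi).2 (Filter.Eventually.of_forall fun r hr => ?_)
    have hr1 : (1:ℝ) < r := hr
    rw [Real.norm_eq_abs, abs_of_nonneg (by positivity)]
    calc r ^ (-α) * Real.exp (-(x * r)) ≤ 1 * Real.exp (-(x * r)) := by
          refine mul_le_mul_of_nonneg_right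
            (Real.rpow_le_one_of_one_le_of_nonpos hr1.le (by linarith)) (Real.exp_pos _).le
      _ = Real.exp (-x * r) := by rw [one_mul, neg_mul]
  refine (hpart1.union hpart2).mono_set fun r hr => ?_
  rcases le_or_gt r 1 with h | h
  · exact Or.inl ⟨hr, h⟩
  · exact Or.inr h

/-- The Fubini kernel. -/
noncomputable def Fker (α W x r : ℝ) : ℝ :=
  (Real.sqrt x)⁻¹ * Real.exp (-(W ^ 2 / 2 * x + 1 / (2 * x))) * (r ^ (-α) * Real.exp (-(x * r)))

set_option maxHeartbeats 1000000 in
/-- The key identity. -/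
lemma key {α W : ℝ} (h0 : 0 ≤ α) (h1 : α < 1 / 2) (hW : 0 < W) :
    ∫ x in Ioi (0:ℝ), x ^ (α - 3 / 2) * Real.exp (-((W * x - 1) ^ 2 / (2 * x)))
      = Real.sqrt (2 * π) * 2 ^ α / Real.Gamma (1 - α)
          * ∫ s in Ioi (0:ℝ), Real.exp (-s) * (s * (s + 2 * W)) ^ (-α) := by
  have hΓ : 0 < Real.Gamma (1 - α) := Real.Gamma_pos_of_pos (by linarith)
  have ha0 : (0:ℝ) < W ^ 2 / 2 := by positivity
  -- x ^ (α - 3/2) = x ^ (α-1) * (√x)⁻¹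
  have hsplit : ∀ x : ℝ, 0 < x → x ^ (α - 3 / 2) = x ^ (α - 1) * (Real.sqrt x)⁻¹ := by
    intro x hx
    rw [Real.sqrt_eq_rpow, ← Real.rpow_neg hx.le, ← Real.rpow_add hx]
    congr 1
    ring
  -- Step A
  have hA : ∫ x in Ioi (0:ℝ), x ^ (α - 3 / 2) * Real.exp (-((W * x - 1) ^ 2 / (2 * x)))
      = Real.exp W * ∫ x in Ioi (0:ℝ),
          x ^ (α - 3 / 2) * Real.exp (-(W ^ 2 / 2 * x + 1 / (2 * x))) := by
    rw [← integral_const_mul]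
    refine setIntegral_congr_fun measurableSet_Ioi fun x hx => ?_
    have hx0 : (0:ℝ) < x := hx
    have harg : -((W * x - 1) ^ 2 / (2 * x)) = W + -(W ^ 2 / 2 * x + 1 / (2 * x)) := by
      field_simp
      ring
    rw [harg, Real.exp_add]
    ring
  -- Step B
  have hB : ∫ x in Ioi (0:ℝ), x ^ (α - 3 / 2) * Real.exp (-(W ^ 2 / 2 * x + 1 / (2 * x)))
      = (Real.Gamma (1 - α))⁻¹
          * ∫ x in Ioi (0:ℝ), ∫ r in Ioi (0:ℝ), Fker α W x r := by
    rw [← integral_const_mul]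
    refine setIntegral_congr_fun measurableSet_Ioi fun x hx => ?_
    have hx0 : (0:ℝ) < x := hx
    have hFr : ∫ r in Ioi (0:ℝ), Fker α W x r
        = (Real.sqrt x)⁻¹ * Real.exp (-(W ^ 2 / 2 * x + 1 / (2 * x)))
            * (Real.Gamma (1 - α) * x ^ (α - 1)) := by
      simp only [Fker]
      rw [integral_const_mul, gammaInner h1 hx0]
    rw [hFr, hsplit x hx0]
    field_simp
  -- Fubini
  have hmeasF : AEStronglyMeasurable (Function.uncurry (Fker α W))
      ((volume.restrict (Ioi 0)).prod (volume.restrict (Ioi 0))) := by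
    rw [Measure.prod_restrict, ← Measure.volume_eq_prod]
    have c1 : ContinuousOn (fun p : ℝ × ℝ => (Real.sqrt p.1)⁻¹)
        (Ioi (0:ℝ) ×ˢ Ioi (0:ℝ)) := by
      refine ContinuousOn.inv₀ (Real.continuous_sqrt.comp continuous_fst).continuousOn ?_
      rintro ⟨x, r⟩ ⟨hx, hr⟩
      exact ne_of_gt (Real.sqrt_pos.2 hx)
    have c2 : ContinuousOn (fun p : ℝ × ℝ => Real.exp (-(W ^ 2 / 2 * p.1 + 1 / (2 * p.1))))
        (Ioi (0:ℝ) ×ˢ Ioi (0:ℝ)) := by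
      refine Real.continuous_exp.comp_continuousOn
        (ContinuousOn.neg (ContinuousOn.add (Continuous.continuousOn (by continuity)) ?_))
      refine ContinuousOn.div continuousOn_const (Continuous.continuousOn (by continuity)) ?_
      rintro ⟨x, r⟩ ⟨hx, hr⟩
      have hx0 : (0:ℝ) < x := hx
      positivity
    have c3 : ContinuousOn (fun p : ℝ × ℝ => p.2 ^ (-α)) (Ioi (0:ℝ) ×ˢ Ioi (0:ℝ)) := by
      refine ContinuousOn.rpow_const continuous_snd.continuousOn ?_
      rintro ⟨x, r⟩ ⟨hx, hr⟩
      exact Or.inl (ne_of_gt hr)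
    have c4 : Continuous fun p : ℝ × ℝ => Real.exp (-(p.1 * p.2)) := by continuity
    exact (((c1.mul c2).mul (c3.mul c4.continuousOn)).congr fun p hp => rfl).aestronglyMeasurable
      (measurableSet_Ioi.prod measurableSet_Ioi)
  have hint : Integrable (Function.uncurry (Fker α W))
      ((volume.restrict (Ioi 0)).prod (volume.restrict (Ioi 0))) := by
    refine (integrable_prod_iff hmeasF).2 ⟨?_, ?_⟩
    · refine (ae_restrict_iff' measurableSet_Ioi).2 (Filter.Eventually.of_forall fun x hx => ?_)
      have hx0 : (0:ℝ) < x := hx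
      have h2 := (gammaInnerInt (α := α) h0 h1 hx0).const_mul
        ((Real.sqrt x)⁻¹ * Real.exp (-(W ^ 2 / 2 * x + 1 / (2 * x))))
      exact h2
    · have hgood : IntegrableOn (fun x : ℝ => Real.Gamma (1 - α)
          * ((Real.sqrt x)⁻¹ * Real.exp (-(W ^ 2 / 2 * x + 1 / (2 * x))) * x ^ (α - 1)))
          (Ioi 0) := by
        have hm := (int_master (c := α - 3 / 2) (by linarith) (by linarith) ha0
          one_half_pos).const_mul (Real.Gamma (1 - α))
        refine IntegrableOn.congr_fun hm (fun x hx => ?_) measurableSet_Ioi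
        have hx0 : (0:ℝ) < x := hx
        rw [div_div, hsplit x hx0]
        ring
      refine hgood.congr ?_
      refine (ae_restrict_iff' measurableSet_Ioi).2 (Filter.Eventually.of_forall fun x hx => ?_)
      have hx0 : (0:ℝ) < x := hx
      have hnn : ∀ r ∈ Ioi (0:ℝ), ‖Fker α W x r‖ = Fker α W x r := by
        intro r hr
        have hr0 : (0:ℝ) < r := hr
        rw [Real.norm_eq_abs, abs_of_nonneg]
        simp only [Fker]
        positivity
      simp only [Function.uncurry]
      rw [setIntegral_congr_fun measurableSet_Ioi hnn]
      simp only [Fker]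
      rw [integral_const_mul, gammaInner h1 hx0]
      ring
  have hC : ∫ x in Ioi (0:ℝ), ∫ r in Ioi (0:ℝ), Fker α W x r
      = ∫ r in Ioi (0:ℝ), ∫ x in Ioi (0:ℝ), Fker α W x r := integral_integral_swap hint
  -- Step D : inner x-integral via Glasser
  have hD : ∫ r in Ioi (0:ℝ), ∫ x in Ioi (0:ℝ), Fker α W x r
      = Real.sqrt π * ∫ r in Ioi (0:ℝ),
          r ^ (-α) * ((Real.sqrt (r + W ^ 2 / 2))⁻¹
            * Real.exp (-Real.sqrt (2 * (r + W ^ 2 / 2)))) := by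
    rw [← integral_const_mul]
    refine setIntegral_congr_fun measurableSet_Ioi fun r hr => ?_
    have hr0 : (0:ℝ) < r := hr
    have hra : (0:ℝ) < r + W ^ 2 / 2 := by positivity
    have hx1 : ∫ x in Ioi (0:ℝ), Fker α W x r
        = r ^ (-α) * ∫ x in Ioi (0:ℝ),
            (Real.sqrt x)⁻¹ * Real.exp (-((r + W ^ 2 / 2) * x + 1 / (2 * x))) := by
      rw [← integral_const_mul]
      refine setIntegral_congr_fun measurableSet_Ioi fun x hx => ?_
      have hx0 : (0:ℝ) < x := hx
      simp only [Fker]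
      have harg : -((r + W ^ 2 / 2) * x + 1 / (2 * x))
          = -(W ^ 2 / 2 * x + 1 / (2 * x)) + -(x * r) := by ring
      rw [harg, Real.exp_add]
      ring
    rw [hx1, glasserB hra]
    field_simp
  -- Step E : substitution r = s²/2 + W s
  have hE : ∫ r in Ioi (0:ℝ),
        r ^ (-α) * ((Real.sqrt (r + W ^ 2 / 2))⁻¹
          * Real.exp (-Real.sqrt (2 * (r + W ^ 2 / 2))))
      = Real.sqrt 2 * Real.exp (-W) * 2 ^ α
          * ∫ s in Ioi (0:ℝ), Real.exp (-s) * (s * (s + 2 * W)) ^ (-α) := by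
    have himg : (fun s : ℝ => s ^ 2 / 2 + W * s) '' Ioi 0 = Ioi 0 := by
      apply Subset.antisymm
      · rintro y ⟨s, hs, rfl⟩
        have hs0 : (0:ℝ) < s := hs
        refine mem_Ioi.mpr ?_
        positivity
      · intro r hr
        have hr0 : (0:ℝ) < r := hr
        have ht0 : (0:ℝ) ≤ W ^ 2 + 2 * r := by positivity
        set t := Real.sqrt (W ^ 2 + 2 * r) with htt
        have ht2 : t ^ 2 = W ^ 2 + 2 * r := Real.sq_sqrt ht0
        have htW : W < t := by
          have : Real.sqrt (W ^ 2) < t := by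
            apply Real.sqrt_lt_sqrt (by positivity)
            linarith
          rwa [Real.sqrt_sq hW.le] at this
        refine ⟨t - W, mem_Ioi.mpr (by linarith), ?_⟩
        simp only []
        linear_combination ht2 / 2
    have hderiv : ∀ s ∈ Ioi (0:ℝ),
        HasDerivWithinAt (fun s : ℝ => s ^ 2 / 2 + W * s) (s + W) (Ioi 0) s := by
      intro s hs
      have h1 : HasDerivAt (fun s : ℝ => s ^ 2 / 2 + W * s) (s + W) s := by
        have h2 := ((hasDerivAt_pow 2 s).div_const 2).add ((hasDerivAt_id s).const_mul W)
        rw [show s + W = ↑2 * s ^ (2 - 1) / 2 + W * 1 by norm_num]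
        exact h2
      exact h1.hasDerivWithinAt
    have hinj : InjOn (fun s : ℝ => s ^ 2 / 2 + W * s) (Ioi 0) := by
      have hmono : StrictMonoOn (fun s : ℝ => s ^ 2 / 2 + W * s) (Ioi 0) := by
        intro x hx y hy hxy
        have hx0 : (0:ℝ) < x := hx
        simp only []
        nlinarith
      exact hmono.injOn
    have himage := integral_image_eq_integral_abs_deriv_smul measurableSet_Ioi hderiv hinj
      (fun r : ℝ => r ^ (-α) * ((Real.sqrt (r + W ^ 2 / 2))⁻¹
        * Real.exp (-Real.sqrt (2 * (r + W ^ 2 / 2)))))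
    rw [himg] at himage
    rw [himage, ← integral_const_mul]
    refine setIntegral_congr_fun measurableSet_Ioi fun s hs => ?_
    have hs0 : (0:ℝ) < s := hs
    have hsW : (0:ℝ) < s + W := by linarith
    have e1 : s ^ 2 / 2 + W * s + W ^ 2 / 2 = (s + W) ^ 2 / 2 := by ring
    have e2 : Real.sqrt ((s + W) ^ 2 / 2) = (s + W) / Real.sqrt 2 := by
      rw [Real.sqrt_div (sq_nonneg _), Real.sqrt_sq hsW.le]
    have e3 : 2 * ((s + W) ^ 2 / 2) = (s + W) ^ 2 := by ring
    have e4 : Real.sqrt ((s + W) ^ 2) = s + W := Real.sqrt_sq hsW.le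
    have e5 : s ^ 2 / 2 + W * s = s * (s + 2 * W) / 2 := by ring
    have e6 : (s * (s + 2 * W) / 2) ^ (-α) = 2 ^ α * (s * (s + 2 * W)) ^ (-α) := by
      rw [Real.div_rpow (by positivity) (by norm_num : (0:ℝ) ≤ 2),
        Real.rpow_neg (by norm_num : (0:ℝ) ≤ 2)]
      field_simp
    have e7 : Real.exp (-(s + W)) = Real.exp (-s) * Real.exp (-W) := by
      rw [← Real.exp_add]
      congr 1
      ring
    simp only [smul_eq_mul]
    rw [e1, e2, e3, e4, e5, e6, e7, abs_of_pos hsW]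
    have hs2 : (0:ℝ) < Real.sqrt 2 := Real.sqrt_pos.2 two_pos
    field_simp
  -- assemble
  rw [hA, hB, hC, hD, hE]
  rw [Real.sqrt_mul (by norm_num : (0:ℝ) ≤ 2) π, Real.exp_neg]
  have hexp := Real.exp_ne_zero W
  field_simp

end IGAux

theorem ig_moment_le_Cconst (α : ℝ) (h0 : 0 ≤ α) (h1 : α < 1 / 2) :
    (∀ W : ℝ, 0 < W →
      ∫ x in Ioi (0 : ℝ), x ^ α * igPdf W⁻¹ 1 x ≤ Cconst α) ∧
    Tendsto (fun W : ℝ => ∫ x in Ioi (0 : ℝ), x ^ α * igPdf W⁻¹ 1 x)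
      (nhdsWithin 0 (Ioi 0)) (nhds (Cconst α)) := by
  have hΓα : 0 < Real.Gamma (1 - α) := Real.Gamma_pos_of_pos (by linarith)
  have hΓ2α : 0 < Real.Gamma (1 - 2 * α) := Real.Gamma_pos_of_pos (by linarith)
  have hsπ : 0 < Real.sqrt Real.pi := Real.sqrt_pos.2 Real.pi_pos
  have hs2π : 0 < Real.sqrt (2 * Real.pi) := Real.sqrt_pos.2 (by positivity)
  -- the constant rewritten
  have hC : Cconst α = 2 ^ α / Real.Gamma (1 - α) * Real.Gamma (1 - 2 * α) := by
    have hd := Real.Gamma_mul_Gamma_add_half (1 / 2 - α)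
    have e1 : (1:ℝ) / 2 - α + 1 / 2 = 1 - α := by ring
    have e2 : 2 * ((1:ℝ) / 2 - α) = 1 - 2 * α := by ring
    have e3 : (1:ℝ) - (1 - 2 * α) = 2 * α := by ring
    rw [e1] at hd; rw [e2] at hd; rw [e3] at hd
    have h2 : (2:ℝ) ^ (-α) * (2:ℝ) ^ (2 * α) = 2 ^ α := by
      rw [← Real.rpow_add (by norm_num : (0:ℝ) < 2)]; ring_nf
    rw [Cconst]
    field_simp
    rw [show ((1:ℝ) - α * 2) / 2 = 1 / 2 - α by ring, show (1:ℝ) - α * 2 = 1 - 2 * α by ring,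
      show Real.sqrt Real.pi * 2 ^ α * Real.Gamma (1 - 2 * α)
        = 2 ^ α * Real.Gamma (1 - 2 * α) * Real.sqrt Real.pi by ring]
    calc 2 ^ (-α) * Real.Gamma (1 / 2 - α) * Real.Gamma (1 - α)
        = 2 ^ (-α) * (Real.Gamma (1 / 2 - α) * Real.Gamma (1 - α)) := by ring
      _ = 2 ^ (-α) * (Real.Gamma (1 - 2 * α) * (2:ℝ) ^ (2 * α) * Real.sqrt Real.pi) := by
          rw [hd]
      _ = (2 ^ (-α) * (2:ℝ) ^ (2 * α)) * Real.Gamma (1 - 2 * α) * Real.sqrt Real.pi := by ring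
      _ = 2 ^ α * Real.Gamma (1 - 2 * α) * Real.sqrt Real.pi := by rw [h2]
  -- the moment in closed form
  have hJ : ∀ W : ℝ, 0 < W →
      ∫ x in Ioi (0 : ℝ), x ^ α * igPdf W⁻¹ 1 x
        = 2 ^ α / Real.Gamma (1 - α)
            * ∫ s in Ioi (0:ℝ), Real.exp (-s) * (s * (s + 2 * W)) ^ (-α) := by
    intro W hW
    have hcong : ∀ x ∈ Ioi (0:ℝ), x ^ α * igPdf W⁻¹ 1 x
        = (Real.sqrt (2 * Real.pi))⁻¹
            * (x ^ (α - 3 / 2) * Real.exp (-((W * x - 1) ^ 2 / (2 * x)))) := by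
      intro x hx
      have hx0 : (0:ℝ) < x := hx
      have hexp : -(1 * (x - W⁻¹) ^ 2) / (2 * (W⁻¹) ^ 2 * x) = -((W * x - 1) ^ 2 / (2 * x)) := by
        field_simp
      have hsq : Real.sqrt (1 / (2 * Real.pi * x ^ 3))
          = (Real.sqrt (2 * Real.pi))⁻¹ * (x ^ ((3:ℝ) / 2))⁻¹ := by
        have h3 : Real.sqrt (x ^ 3) = x ^ ((3:ℝ)/2) := by
          rw [Real.sqrt_eq_rpow, ← Real.rpow_natCast x 3, ← Real.rpow_mul hx0.le]
          norm_num
        rw [one_div, Real.sqrt_inv, show 2 * Real.pi * x ^ 3 = (2 * Real.pi) * x ^ 3 by ring,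
          Real.sqrt_mul (by positivity), mul_inv, h3]
      rw [igPdf, hexp, hsq]
      have : x ^ α * (x ^ ((3:ℝ)/2))⁻¹ = x ^ (α - 3/2) := by
        rw [← Real.rpow_neg hx0.le, ← Real.rpow_add hx0]
        ring_nf
      calc x ^ α * ((Real.sqrt (2*Real.pi))⁻¹ * (x ^ ((3:ℝ)/2))⁻¹
              * Real.exp (-((W * x - 1) ^ 2 / (2 * x))))
          = (Real.sqrt (2*Real.pi))⁻¹ * ((x ^ α * (x ^ ((3:ℝ)/2))⁻¹)
              * Real.exp (-((W * x - 1) ^ 2 / (2 * x)))) := by ring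
        _ = _ := by rw [this]
    rw [setIntegral_congr_fun measurableSet_Ioi hcong, integral_const_mul,
      IGAux.key h0 h1 hW, ← mul_assoc]
    congr 1
    field_simp
  have hbound : ∀ W : ℝ, 0 < W → ∀ s : ℝ, 0 < s →
      Real.exp (-s) * (s * (s + 2 * W)) ^ (-α) ≤ Real.exp (-s) * s ^ (-2 * α) := by
    intro W hW s hs
    have h1' : s ^ (-2 * α) = (s * s) ^ (-α) := by
      rw [Real.mul_rpow hs.le hs.le, ← Real.rpow_add hs]
      ring_nf
    rw [h1']
    refine mul_le_mul_of_nonneg_left ?_ (Real.exp_pos _).le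
    exact Real.rpow_le_rpow_of_nonpos (by positivity) (by nlinarith) (by linarith)
  have hΓint : Real.Gamma (1 - 2 * α) = ∫ s in Ioi (0:ℝ), Real.exp (-s) * s ^ (-2 * α) := by
    rw [Real.Gamma_eq_integral (by linarith : (0:ℝ) < 1 - 2 * α)]
    congr 1
    ext s
    norm_num
  have hΓintegrable : IntegrableOn (fun s : ℝ => Real.exp (-s) * s ^ (-2 * α)) (Ioi 0) := by
    have := Real.GammaIntegral_convergent (by linarith : (0:ℝ) < 1 - 2 * α)
    refine this.congr_fun (fun s hs => ?_) measurableSet_Ioi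
    norm_num
  constructor
  · intro W hW
    rw [hJ W hW, hC]
    refine mul_le_mul_of_nonneg_left ?_ (by positivity)
    rw [hΓint]
    refine integral_mono_of_nonneg ?_ hΓintegrable ?_
    · refine (ae_restrict_iff' measurableSet_Ioi).2 (Filter.Eventually.of_forall fun s hs => ?_)
      have hs' : (0:ℝ) < s := hs
      positivity
    · refine (ae_restrict_iff' measurableSet_Ioi).2 (Filter.Eventually.of_forall fun s hs => ?_)
      exact hbound W hW s hs
  · have hΦtend : Tendsto
        (fun W : ℝ => ∫ s in Ioi (0:ℝ), Real.exp (-s) * (s * (s + 2 * W)) ^ (-α))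
        (nhdsWithin 0 (Ioi 0)) (nhds (Real.Gamma (1 - 2 * α))) := by
      rw [hΓint]
      apply tendsto_integral_filter_of_dominated_convergence
        (fun s : ℝ => Real.exp (-s) * s ^ (-2 * α))
      · filter_upwards [self_mem_nhdsWithin] with W hW
        have hW' : (0:ℝ) < W := hW
        refine ContinuousOn.aestronglyMeasurable ?_ measurableSet_Ioi
        refine ContinuousOn.mul (Continuous.continuousOn (by continuity)) ?_
        refine ContinuousOn.rpow_const ?_ fun s hs => Or.inl ?_
        · exact Continuous.continuousOn (by continuity)
        · have hs' : (0:ℝ) < s := hs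
          positivity
      · filter_upwards [self_mem_nhdsWithin] with W hW
        refine (ae_restrict_iff' measurableSet_Ioi).2 (Filter.Eventually.of_forall fun s hs => ?_)
        have hs' : (0:ℝ) < s := hs
        have hW' : (0:ℝ) < W := hW
        rw [Real.norm_eq_abs, abs_of_nonneg (by positivity)]
        exact hbound W hW' s hs'
      · exact hΓintegrable
      · refine (ae_restrict_iff' measurableSet_Ioi).2 (Filter.Eventually.of_forall fun s hs => ?_)
        have hs' : (0:ℝ) < s := hs
        have hbase : Tendsto (fun W : ℝ => s * (s + 2 * W)) (nhdsWithin 0 (Ioi 0))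
            (nhds (s * s)) := by
          have hcont : Continuous (fun W : ℝ => s * (s + 2 * W)) := by continuity
          have := hcont.tendsto 0
          simp only [mul_zero, add_zero] at this
          exact this.mono_left nhdsWithin_le_nhds
        have hrpow : Tendsto (fun W : ℝ => (s * (s + 2 * W)) ^ (-α)) (nhdsWithin 0 (Ioi 0))
            (nhds ((s * s) ^ (-α))) := by
          have hc : ContinuousAt (fun y : ℝ => y ^ (-α)) (s * s) :=
            Real.continuousAt_rpow_const _ _ (Or.inl (by positivity))
          exact hc.tendsto.comp hbase
        have hss : (s * s) ^ (-α) = s ^ (-2 * α) := by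
          rw [Real.mul_rpow hs'.le hs'.le, ← Real.rpow_add hs']
          ring_nf
        rw [← hss]
        exact hrpow.const_mul _
    have heq : ∀ᶠ W : ℝ in nhdsWithin 0 (Ioi 0),
        2 ^ α / Real.Gamma (1 - α)
            * ∫ s in Ioi (0:ℝ), Real.exp (-s) * (s * (s + 2 * W)) ^ (-α)
          = ∫ x in Ioi (0 : ℝ), x ^ α * igPdf W⁻¹ 1 x := by
      filter_upwards [self_mem_nhdsWithin] with W hW
      exact (hJ W hW).symm
    have h2 : Tendsto (fun W : ℝ => 2 ^ α / Real.Gamma (1 - α)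
        * ∫ s in Ioi (0:ℝ), Real.exp (-s) * (s * (s + 2 * W)) ^ (-α))
        (nhdsWithin 0 (Ioi 0)) (nhds (Cconst α)) := by
      rw [hC]
      exact hΦtend.const_mul _
    exact h2.congr' heq
end

section
/- For α ∈ [0, 1/2) and W > 0, the function W ↦ E[X_W^α], where X_W ~ IG(1/W, 1), is nonincreasing in W. -/
open MeasureTheory Set

lemma igaux_pow_le_exp (n : ℕ) {t : ℝ} (ht : 0 ≤ t) :
    t ^ n ≤ (n : ℝ) ^ n * Real.exp t := by
  rcases Nat.eq_zero_or_pos n with h | h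
  · subst h; simpa using Real.one_le_exp ht
  have hn : (0 : ℝ) < n := by exact_mod_cast h
  have h1 : t / n ≤ Real.exp (t / n) :=
    le_trans (by linarith [Real.add_one_le_exp (t / n)]) le_rfl
  have h2 : (t / n) ^ n ≤ Real.exp (t / n) ^ n :=
    pow_le_pow_left₀ (div_nonneg ht hn.le) h1 n
  have h3 : Real.exp (t / n) ^ n = Real.exp t := by
    rw [← Real.exp_nat_mul]; congr 1; field_simp
  calc t ^ n = (n : ℝ) ^ n * (t / n) ^ n := by
        rw [← mul_pow]; congr 1; field_simp
    _ ≤ (n : ℝ) ^ n * Real.exp t := by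
        rw [← h3]; exact mul_le_mul_of_nonneg_left h2 (by positivity)

set_option maxHeartbeats 1000000 in
lemma igaux_master (β a b : ℝ) (ha : 0 < a) (hb : 0 < b) :
    IntegrableOn (fun x : ℝ => x ^ β * Real.exp (-(a * x) - b / x)) (Ioi 0) := by
  obtain ⟨n, hn⟩ : ∃ n : ℕ, |β| ≤ n := exists_nat_ge |β|
  set C : ℝ := (n : ℝ) ^ n * (2 / a) ^ n + (n : ℝ) ^ n * (1 / b) ^ n with hC
  have hmeas : AEStronglyMeasurable (fun x : ℝ => x ^ β * Real.exp (-(a * x) - b / x))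
      (volume.restrict (Ioi 0)) := by
    apply ContinuousOn.aestronglyMeasurable _ measurableSet_Ioi
    apply ContinuousOn.mul
    · exact continuousOn_id.rpow_const fun x hx => Or.inl (ne_of_gt hx)
    · apply Real.continuous_exp.comp_continuousOn
      apply ContinuousOn.sub (continuous_const.mul continuous_id).neg.continuousOn
      exact continuousOn_const.div continuousOn_id fun x hx => ne_of_gt hx
  have hInt : IntegrableOn (fun x : ℝ => C * Real.exp (-(a / 2 * x))) (Ioi 0) := by
    have h := (exp_neg_integrableOn_Ioi 0 (half_pos ha)).const_mul C
    simp only [neg_mul] at h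
    exact h
  refine Integrable.mono' hInt hmeas ?_
  filter_upwards [self_mem_ae_restrict (measurableSet_Ioi : MeasurableSet (Ioi (0:ℝ)))] with x hx
  have hx0 : (0 : ℝ) < x := hx
  have hrb : x ^ β ≤ x ^ (n : ℝ) + x ^ (-(n : ℝ)) := by
    rcases le_or_gt 1 x with h | h
    · have := Real.rpow_le_rpow_of_exponent_le h (abs_le.mp hn).2
      have h2 : (0:ℝ) ≤ x ^ (-(n:ℝ)) := (Real.rpow_pos_of_pos hx0 _).le
      linarith
    · have h1 : β ≥ -(n:ℝ) := by
        have := (abs_le.mp hn).1; linarith [neg_abs_le β]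
      have := Real.rpow_le_rpow_of_exponent_ge hx0 h.le h1
      have h2 : (0:ℝ) ≤ x ^ (n:ℝ) := (Real.rpow_pos_of_pos hx0 _).le
      linarith
  have hxn : x ^ (n : ℝ) = x ^ n := Real.rpow_natCast x n
  have hxmn : x ^ (-(n : ℝ)) = (x ^ n)⁻¹ := by
    rw [Real.rpow_neg hx0.le, hxn]
  -- bound 1 : x^n * exp(-(a*x) - b/x) ≤ n^n (2/a)^n exp(-(a/2) x)
  have hb1 : x ^ n * Real.exp (-(a * x) - b / x) ≤ (n:ℝ)^n * (2/a)^n * Real.exp (-(a/2*x)) := by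
    have key : (a / 2 * x) ^ n ≤ (n:ℝ)^n * Real.exp (a/2*x) := igaux_pow_le_exp n (by positivity)
    have hxpow : x ^ n ≤ (n:ℝ)^n * (2/a)^n * Real.exp (a/2*x) := by
      have : x ^ n = (a/2*x)^n * (2/a)^n := by
        rw [← mul_pow]; congr 1; field_simp
      rw [this]
      calc (a/2*x)^n * (2/a)^n ≤ ((n:ℝ)^n * Real.exp (a/2*x)) * (2/a)^n :=
            mul_le_mul_of_nonneg_right key (by positivity)
        _ = (n:ℝ)^n * (2/a)^n * Real.exp (a/2*x) := by ring
    have hexp : Real.exp (-(a * x) - b / x) ≤ Real.exp (-(a*x)) := by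
      apply Real.exp_le_exp.mpr; have : 0 < b / x := by positivity
      linarith
    calc x ^ n * Real.exp (-(a * x) - b / x) ≤ x ^ n * Real.exp (-(a*x)) :=
          mul_le_mul_of_nonneg_left hexp (by positivity)
      _ ≤ ((n:ℝ)^n * (2/a)^n * Real.exp (a/2*x)) * Real.exp (-(a*x)) :=
          mul_le_mul_of_nonneg_right hxpow (Real.exp_nonneg _)
      _ = (n:ℝ)^n * (2/a)^n * Real.exp (-(a/2*x)) := by
          rw [mul_assoc, ← Real.exp_add]; congr 2; ring
  -- bound 2 : x^(-n) * exp(-(a*x) - b/x) ≤ n^n (1/b)^n exp(-(a/2) x)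
  have hb2 : (x ^ n)⁻¹ * Real.exp (-(a * x) - b / x) ≤ (n:ℝ)^n * (1/b)^n * Real.exp (-(a/2*x)) := by
    have key : (b / x) ^ n ≤ (n:ℝ)^n * Real.exp (b/x) := igaux_pow_le_exp n (by positivity)
    have hinv : (x ^ n)⁻¹ ≤ (n:ℝ)^n * (1/b)^n * Real.exp (b/x) := by
      have h1 : (x ^ n)⁻¹ = (b/x)^n * (1/b)^n := by
        rw [← mul_pow]; rw [show b/x * (1/b) = x⁻¹ by field_simp]; exact (inv_pow x n).symm
      rw [h1]
      calc (b/x)^n * (1/b)^n ≤ ((n:ℝ)^n * Real.exp (b/x)) * (1/b)^n :=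
            mul_le_mul_of_nonneg_right key (by positivity)
        _ = (n:ℝ)^n * (1/b)^n * Real.exp (b/x) := by ring
    calc (x ^ n)⁻¹ * Real.exp (-(a * x) - b / x)
        ≤ ((n:ℝ)^n * (1/b)^n * Real.exp (b/x)) * Real.exp (-(a * x) - b/x) :=
          mul_le_mul_of_nonneg_right hinv (Real.exp_nonneg _)
      _ = (n:ℝ)^n * (1/b)^n * Real.exp (-(a*x)) := by
          rw [mul_assoc, ← Real.exp_add]; congr 2; ring
      _ ≤ (n:ℝ)^n * (1/b)^n * Real.exp (-(a/2*x)) := by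
          apply mul_le_mul_of_nonneg_left _ (by positivity)
          apply Real.exp_le_exp.mpr; nlinarith
  have hnonneg : 0 ≤ x ^ β * Real.exp (-(a * x) - b / x) := by positivity
  rw [Real.norm_eq_abs, abs_of_nonneg hnonneg]
  calc x ^ β * Real.exp (-(a * x) - b / x)
      ≤ (x ^ (n:ℝ) + x ^ (-(n:ℝ))) * Real.exp (-(a * x) - b / x) :=
        mul_le_mul_of_nonneg_right hrb (Real.exp_nonneg _)
    _ = x ^ n * Real.exp (-(a * x) - b / x) + (x ^ n)⁻¹ * Real.exp (-(a * x) - b / x) := by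
        rw [hxn, hxmn]; ring
    _ ≤ (n:ℝ)^n * (2/a)^n * Real.exp (-(a/2*x)) + (n:ℝ)^n * (1/b)^n * Real.exp (-(a/2*x)) :=
        add_le_add hb1 hb2
    _ = C * Real.exp (-(a/2*x)) := by rw [hC]; ring



noncomputable def igE (W x : ℝ) : ℝ := Real.exp (-(W * x - 1) ^ 2 / (2 * x))

lemma igE_eq {W x : ℝ} (hx : 0 < x) :
    igE W x = Real.exp W * Real.exp (-(W ^ 2 / 2 * x) - 1 / 2 / x) := by
  rw [igE, ← Real.exp_add]; congr 1; field_simp; ring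

lemma igE_pos (W x : ℝ) : 0 < igE W x := Real.exp_pos _

lemma igE_contOn (W : ℝ) : ContinuousOn (fun x => igE W x) (Ioi 0) := by
  apply Real.continuous_exp.comp_continuousOn
  apply ContinuousOn.div
  · fun_prop
  · fun_prop
  · intro x hx; have : (0:ℝ) < x := hx; positivity

lemma igPsi_contOn (α W : ℝ) :
    ContinuousOn (fun x => x ^ (α - 3/2) * ((W * x - 1) * igE W x)) (Ioi 0) := by
  apply ContinuousOn.mul
  · exact continuousOn_id.rpow_const fun x hx => Or.inl (ne_of_gt hx)
  · exact (((continuous_const.mul continuous_id).sub continuous_const).continuousOn).mul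
      (igE_contOn W)

lemma igPhi_contOn (α W : ℝ) :
    ContinuousOn (fun x => x ^ (α - 3/2) * igE W x) (Ioi 0) := by
  apply ContinuousOn.mul
  · exact continuousOn_id.rpow_const fun x hx => Or.inl (ne_of_gt hx)
  · exact igE_contOn W

lemma igPhi_integrableOn (α : ℝ) {W : ℝ} (hW : 0 < W) :
    IntegrableOn (fun x => x ^ (α - 3/2) * igE W x) (Ioi 0) := by
  have hInt : IntegrableOn
      (fun x : ℝ => Real.exp W * (x ^ (α - 3/2) * Real.exp (-(W^2/2 * x) - 1/2 / x)))
      (Ioi 0) := (igaux_master (α - 3/2) (W^2/2) (1/2) (by positivity) one_half_pos).const_mul _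
  refine Integrable.mono' hInt
    ((igPhi_contOn α W).aestronglyMeasurable measurableSet_Ioi) ?_
  filter_upwards [self_mem_ae_restrict (measurableSet_Ioi : MeasurableSet (Ioi (0:ℝ)))] with x hx
  have hx0 : (0:ℝ) < x := hx
  rw [Real.norm_eq_abs,
    abs_of_nonneg (mul_nonneg (Real.rpow_nonneg hx0.le _) (igE_pos W x).le)]
  rw [igE_eq hx0]; ring_nf; exact le_rfl

/-- The uniform majorant for `ψ W x` over `W ∈ [W1, W2]`. -/
noncomputable def igG (α W1 W2 x : ℝ) : ℝ :=
  Real.exp W2 * ((W2 * x ^ (α - 1/2) + x ^ (α - 3/2)) * Real.exp (-(W1^2/2 * x) - 1/2 / x))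

lemma igG_integrableOn (α : ℝ) {W1 : ℝ} (W2 : ℝ) (hW1 : 0 < W1) :
    IntegrableOn (fun x => igG α W1 W2 x) (Ioi 0) := by
  have h1 := (igaux_master (α - 1/2) (W1^2/2) (1/2) (by positivity) one_half_pos).const_mul W2
  have h2 := igaux_master (α - 3/2) (W1^2/2) (1/2) (by positivity) one_half_pos
  have h3 : IntegrableOn (fun x : ℝ => Real.exp W2 *
      (W2 * (x ^ (α - 1/2) * Real.exp (-(W1^2/2 * x) - 1/2 / x))
        + x ^ (α - 3/2) * Real.exp (-(W1^2/2 * x) - 1/2 / x))) (Ioi 0) :=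
    (h1.add h2).const_mul (Real.exp W2)
  refine h3.congr_fun (fun x hx => ?_) measurableSet_Ioi
  simp only [igG]; ring

lemma igPsi_bound {α W W1 W2 x : ℝ} (hW1 : 0 < W1) (hWl : W1 ≤ W) (hWu : W ≤ W2)
    (hx : 0 < x) :
    ‖x ^ (α - 3/2) * ((W * x - 1) * igE W x)‖ ≤ igG α W1 W2 x := by
  have hW : 0 < W := lt_of_lt_of_le hW1 hWl
  have hE : igE W x ≤ Real.exp W2 * Real.exp (-(W1^2/2 * x) - 1/2 / x) := by
    rw [igE_eq hx]
    have h1 : Real.exp W ≤ Real.exp W2 := Real.exp_le_exp.mpr hWu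
    have h2 : Real.exp (-(W^2/2 * x) - 1/2 / x) ≤ Real.exp (-(W1^2/2 * x) - 1/2 / x) := by
      apply Real.exp_le_exp.mpr
      have : W1^2 ≤ W^2 := by nlinarith
      nlinarith
    exact mul_le_mul h1 h2 (Real.exp_nonneg _) (Real.exp_nonneg _)
  have habs : |W * x - 1| ≤ W2 * x + 1 := by
    rw [abs_le]; constructor <;> nlinarith
  rw [Real.norm_eq_abs, abs_mul, abs_mul]
  rw [abs_of_nonneg (Real.rpow_nonneg hx.le _), abs_of_pos (igE_pos W x)]
  have hxp : (0:ℝ) ≤ x ^ (α - 3/2) := Real.rpow_nonneg hx.le _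
  calc x ^ (α - 3/2) * (|W * x - 1| * igE W x)
      ≤ x ^ (α - 3/2) * ((W2 * x + 1) * (Real.exp W2 * Real.exp (-(W1^2/2 * x) - 1/2 / x))) := by
        apply mul_le_mul_of_nonneg_left _ hxp
        exact mul_le_mul habs hE (igE_pos W x).le (by nlinarith)
    _ = igG α W1 W2 x := by
        rw [igG]
        have hx1 : x ^ (α - 3/2) * x = x ^ (α - 1/2) := by
          rw [← Real.rpow_add_one hx.ne']; congr 1; ring
        rw [← hx1]; ring



lemma igPsi_integrableOn (α : ℝ) {W : ℝ} (hW : 0 < W) :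
    IntegrableOn (fun x => x ^ (α - 3/2) * ((W * x - 1) * igE W x)) (Ioi 0) := by
  refine Integrable.mono' (igG_integrableOn α W hW)
    ((igPsi_contOn α W).aestronglyMeasurable measurableSet_Ioi) ?_
  filter_upwards [self_mem_ae_restrict (measurableSet_Ioi : MeasurableSet (Ioi (0:ℝ)))] with x hx
  exact igPsi_bound hW le_rfl le_rfl hx


lemma igPsi_pointwise (α : ℝ) (h0 : 0 ≤ α) {W z : ℝ} (hW : 0 < W) (hz0 : 0 < z)
    (hz1 : 1 ≤ W * z) :
    0 ≤ (W^2 * z^2)⁻¹ * (((W^2)⁻¹ * z⁻¹) ^ (α - 3/2) *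
        ((W * ((W^2)⁻¹ * z⁻¹) - 1) * igE W ((W^2)⁻¹ * z⁻¹)))
      + z ^ (α - 3/2) * ((W * z - 1) * igE W z) := by
  have hWne := hW.ne'
  have hzne := hz0.ne'
  have hEy : igE W ((W^2)⁻¹ * z⁻¹) = igE W z := by
    unfold igE; congr 1; field_simp; ring
  set p := z ^ (α - 3/2) with hp
  set v := W ^ (2*α) with hv
  have hp0 : 0 < p := Real.rpow_pos_of_pos hz0 _
  have hv0 : 0 < v := Real.rpow_pos_of_pos hW _
  have hE0 : 0 < igE W z := igE_pos W z
  have hq0 : 0 < z ^ ((3:ℝ)/2 - α) := Real.rpow_pos_of_pos hz0 _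
  have hyrw : ((W^2)⁻¹ * z⁻¹) ^ (α - 3/2) = (W^3 / v) * z ^ ((3:ℝ)/2 - α) := by
    rw [← mul_inv, Real.inv_rpow (by positivity), ← Real.rpow_neg (by positivity),
      show -(α - 3/2) = 3/2 - α by ring, Real.mul_rpow (by positivity) hz0.le]
    congr 1
    rw [← Real.rpow_natCast W 2, ← Real.rpow_mul hW.le,
      show (2:ℕ) * ((3:ℝ)/2 - α) = (3:ℝ) - 2*α by push_cast; ring,
      Real.rpow_sub hW, hv]
    rw [show ((3:ℝ)) = ((3:ℕ):ℝ) by norm_num, Real.rpow_natCast]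
  have hpq : p * z ^ ((3:ℝ)/2 - α) = 1 := by
    rw [hp, ← Real.rpow_add hz0]; norm_num
  have hqp : z ^ ((3:ℝ)/2 - α) = p⁻¹ := eq_inv_of_mul_eq_one_right hpq
  have h1 : 1 ≤ p * p * z^3 * v := by
    have heq : p * p * z^3 * v = (W * z) ^ (2*α) := by
      rw [hp, hv, ← Real.rpow_add hz0,
        show (z:ℝ)^(3:ℕ) = z ^ ((3:ℕ):ℝ) from (Real.rpow_natCast z 3).symm,
        ← Real.rpow_add hz0, show α - 3/2 + (α - 3/2) + ((3:ℕ):ℝ) = 2*α by push_cast; ring,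
        ← Real.mul_rpow hz0.le hW.le, mul_comm z W]
    rw [heq]
    exact Real.one_le_rpow hz1 (by positivity)
  rw [hEy, hyrw, hqp]
  have hfin : (W^2 * z^2)⁻¹ * ((W^3 / v * p⁻¹) * ((W * ((W^2)⁻¹ * z⁻¹) - 1) * igE W z))
      + p * ((W*z - 1) * igE W z)
      = ((W*z - 1) * ((p*p*z^3*v - 1) * igE W z)) / (p * z^3 * v) := by
    field_simp
    ring
  rw [hfin]
  apply div_nonneg _ (by positivity)
  have h2 : 0 ≤ W*z - 1 := by linarith
  have h3 : 0 ≤ p*p*z^3*v - 1 := by linarith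
  positivity

lemma igPsi_integral_nonneg (α : ℝ) (h0 : 0 ≤ α) {W : ℝ} (hW : 0 < W) :
    0 ≤ ∫ x in Ioi (0:ℝ), x ^ (α - 3/2) * ((W * x - 1) * igE W x) := by
  set ψ : ℝ → ℝ := fun x => x ^ (α - 3/2) * ((W * x - 1) * igE W x) with hψ
  set c : ℝ := W⁻¹ with hc
  have hc0 : 0 < c := inv_pos.mpr hW
  set g : ℝ → ℝ := fun z => (W^2)⁻¹ * z⁻¹ with hg
  set g' : ℝ → ℝ := fun z => (W^2)⁻¹ * -(z^2)⁻¹ with hg'def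
  have hW2 : (0:ℝ) < W^2 := by positivity
  -- derivative
  have hderiv : ∀ z ∈ Ioi c, HasDerivWithinAt g (g' z) (Ioi c) z := by
    intro z hz
    have hz0 : 0 < z := lt_trans hc0 hz
    exact ((hasDerivAt_inv hz0.ne').const_mul ((W^2)⁻¹)).hasDerivWithinAt
  -- injectivity
  have hinj : InjOn g (Ioi c) := by
    intro a ha b hb hab
    have ha0 : a ≠ 0 := (lt_trans hc0 ha).ne'
    have hb0 : b ≠ 0 := (lt_trans hc0 hb).ne'
    have : a⁻¹ = b⁻¹ := mul_left_cancel₀ (inv_ne_zero hW2.ne') hab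
    exact inv_injective this
  -- image
  have himg : g '' Ioi c = Ioo 0 c := by
    ext y
    simp only [mem_image, mem_Ioi, mem_Ioo]
    constructor
    · rintro ⟨z, hz, rfl⟩
      have hz0 : 0 < z := lt_trans hc0 hz
      have hWz : 1 < W * z := by
        have := (mul_lt_mul_iff_right₀ hW).mpr hz
        rwa [hc, mul_inv_cancel₀ hW.ne'] at this
      constructor
      · positivity
      · show (W^2)⁻¹ * z⁻¹ < c
        rw [hc, ← mul_inv, inv_lt_inv₀ (by positivity) hW]
        nlinarith
    · rintro ⟨hy0, hyc⟩
      refine ⟨(W^2 * y)⁻¹, ?_, ?_⟩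
      · show c < (W^2 * y)⁻¹
        rw [hc, inv_lt_inv₀ hW (by positivity)]
        have : W * y < 1 := by
          have := (mul_lt_mul_iff_right₀ hW).mpr hyc
          rwa [hc, mul_inv_cancel₀ hW.ne'] at this
        nlinarith
      · show (W^2)⁻¹ * ((W^2 * y)⁻¹)⁻¹ = y
        field_simp
  -- decompose the integral
  have hint : IntegrableOn ψ (Ioi 0) := igPsi_integrableOn α hW
  have hsub1 : Ioc (0:ℝ) c ⊆ Ioi 0 := Ioc_subset_Ioi_self
  have hsub2 : Ioi c ⊆ Ioi (0:ℝ) := Ioi_subset_Ioi hc0.le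
  have hsub3 : Ioo (0:ℝ) c ⊆ Ioi 0 := Ioo_subset_Ioi_self
  have hdecomp : ∫ x in Ioi (0:ℝ), ψ x
      = (∫ x in Ioc (0:ℝ) c, ψ x) + ∫ x in Ioi c, ψ x := by
    rw [← setIntegral_union (Ioc_disjoint_Ioi le_rfl) measurableSet_Ioi
      (hint.mono_set hsub1) (hint.mono_set hsub2), Ioc_union_Ioi_eq_Ioi hc0.le]
  have hIoo : ∫ x in Ioc (0:ℝ) c, ψ x = ∫ x in Ioo (0:ℝ) c, ψ x :=
    integral_Ioc_eq_integral_Ioo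
  have hcov : ∫ x in Ioo (0:ℝ) c, ψ x = ∫ z in Ioi c, |g' z| • ψ (g z) := by
    rw [← himg]
    exact integral_image_eq_integral_abs_deriv_smul measurableSet_Ioi hderiv hinj ψ
  have hint2 : IntegrableOn (fun z => |g' z| • ψ (g z)) (Ioi c) := by
    rw [← integrableOn_image_iff_integrableOn_abs_deriv_smul measurableSet_Ioi hderiv hinj ψ,
      himg]
    exact hint.mono_set hsub3
  have hsum : ∫ x in Ioi (0:ℝ), ψ x
      = ∫ z in Ioi c, (|g' z| • ψ (g z) + ψ z) := by
    rw [hdecomp, hIoo, hcov, ← integral_add hint2 (hint.mono_set hsub2)]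
  rw [hsum]
  apply setIntegral_nonneg measurableSet_Ioi
  intro z hz
  have hz0 : 0 < z := lt_trans hc0 hz
  have hWz : 1 ≤ W * z := by
    have := (mul_lt_mul_iff_right₀ hW).mpr hz
    rw [hc, mul_inv_cancel₀ hW.ne'] at this
    linarith
  have habs : |g' z| = (W^2 * z^2)⁻¹ := by
    rw [hg'def]
    simp only [mul_neg, abs_neg, abs_mul, mul_inv]
    rw [abs_of_pos (inv_pos.mpr hW2), abs_of_pos (inv_pos.mpr (by positivity : (0:ℝ) < z^2))]
  rw [smul_eq_mul, habs, hψ, hg]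
  exact igPsi_pointwise α h0 hW hz0 hWz




lemma igE_hasDeriv (x W : ℝ) (hx : 0 < x) :
    HasDerivAt (fun W => igE W x) (-((W * x - 1) * igE W x)) W := by
  have h1 : HasDerivAt (fun W : ℝ => W * x - 1) x W := by
    simpa using ((hasDerivAt_id W).mul_const x).sub_const 1
  have h2 : HasDerivAt (fun W : ℝ => (W * x - 1)^2) (2 * (W*x-1) * x) W := by
    have := h1.fun_pow 2
    simpa [mul_comm, mul_assoc, mul_left_comm] using this
  have h3 : HasDerivAt (fun W : ℝ => -(W * x - 1)^2 / (2*x))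
      (-(2*(W*x-1)*x)/(2*x)) W := (h2.neg).div_const (2*x)
  have h4 := h3.exp
  have : igE W x = Real.exp (-(W * x - 1)^2 / (2*x)) := rfl
  convert h4 using 1
  rfl
  rw [this]
  field_simp

lemma igE_cont (x : ℝ) : Continuous (fun W => (W * x - 1) * igE W x) := by
  apply Continuous.mul
  · fun_prop
  · apply Real.continuous_exp.comp
    exact (((continuous_id.mul continuous_const).sub continuous_const).pow 2).neg.div_const _

lemma igE_sub_eq (x : ℝ) (hx : 0 < x) (W1 W2 : ℝ) :
    igE W1 x - igE W2 x = ∫ W in W1..W2, (W * x - 1) * igE W x := by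
  have hftc := intervalIntegral.integral_eq_sub_of_hasDerivAt
    (f := fun W => igE W x) (f' := fun W => -((W * x - 1) * igE W x))
    (a := W1) (b := W2)
    (fun W _ => igE_hasDeriv x W hx) (((igE_cont x).neg).intervalIntegrable W1 W2)
  rw [intervalIntegral.integral_neg] at hftc
  linarith [hftc]

theorem ig_moment_antitone (α : ℝ) (h0 : 0 ≤ α) (h1 : α < 1 / 2) :
    AntitoneOn (fun W : ℝ => ∫ x in Ioi (0 : ℝ), x ^ α * igPdf W⁻¹ 1 x)
      (Ioi 0) := by
  intro W1 hW1 W2 hW2 h12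
  have hW1' : (0:ℝ) < W1 := hW1
  have hW2' : (0:ℝ) < W2 := hW2
  simp only
  -- Step 1 : rewrite the moment integral
  have key : ∀ W : ℝ, 0 < W → ∫ x in Ioi (0:ℝ), x ^ α * igPdf W⁻¹ 1 x
      = (Real.sqrt (2 * Real.pi))⁻¹ * ∫ x in Ioi (0:ℝ), x ^ (α - 3/2) * igE W x := by
    intro W hW
    rw [← integral_const_mul]
    apply setIntegral_congr_fun measurableSet_Ioi
    intro x hx
    have hx0 : (0:ℝ) < x := hx
    have hpi : (0:ℝ) < 2 * Real.pi := by positivity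
    have hexp : -(1 * (x - W⁻¹) ^ 2) / (2 * W⁻¹ ^ 2 * x) = -(W * x - 1)^2 / (2 * x) := by
      rw [div_eq_div_iff (by positivity) (by positivity)]
      field_simp
    have hsqrt : Real.sqrt (1 / (2 * Real.pi * x ^ 3))
        = (Real.sqrt (2 * Real.pi))⁻¹ * x ^ (-(3:ℝ)/2) := by
      rw [one_div, Real.sqrt_inv, Real.sqrt_mul hpi.le, mul_inv]
      congr 1
      rw [Real.sqrt_eq_rpow, ← Real.rpow_natCast x 3, ← Real.rpow_mul hx0.le,
        ← Real.rpow_neg hx0.le]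
      norm_num
    have hpdf : igPdf W⁻¹ 1 x = ((Real.sqrt (2*Real.pi))⁻¹ * x ^ (-(3:ℝ)/2)) * igE W x := by
      simp only [igPdf]
      rw [hexp, hsqrt]
      rfl
    calc x ^ α * igPdf W⁻¹ 1 x
        = x ^ α * (((Real.sqrt (2*Real.pi))⁻¹ * x ^ (-(3:ℝ)/2)) * igE W x) := by
          rw [hpdf]
      _ = (Real.sqrt (2*Real.pi))⁻¹ * (x ^ (α - 3/2) * igE W x) := by
          rw [show α - 3/2 = α + (-(3:ℝ)/2) by ring, Real.rpow_add hx0]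
          ring
  rw [key W1 hW1', key W2 hW2']
  apply mul_le_mul_of_nonneg_left _ (by positivity)
  -- Step 2 : reduce to nonnegativity of the difference
  rw [← sub_nonneg, ← integral_sub (igPhi_integrableOn α hW1') (igPhi_integrableOn α hW2')]
  -- Step 3 : express the difference via an interval integral in W
  have hdiff : ∀ x ∈ Ioi (0:ℝ),
      x ^ (α - 3/2) * igE W1 x - x ^ (α - 3/2) * igE W2 x
      = ∫ W in Ioc W1 W2, x ^ (α - 3/2) * ((W * x - 1) * igE W x) := by
    intro x hx
    have hx0 : (0:ℝ) < x := hx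
    rw [← intervalIntegral.integral_of_le h12, intervalIntegral.integral_const_mul,
      ← igE_sub_eq x hx0]
    ring
  rw [setIntegral_congr_fun measurableSet_Ioi hdiff]
  -- Step 4 : product integrability and Fubini
  have hprod : Integrable (fun p : ℝ × ℝ => p.1 ^ (α - 3/2) * ((p.2 * p.1 - 1) * igE p.2 p.1))
      ((volume.restrict (Ioi (0:ℝ))).prod (volume.restrict (Ioc W1 W2))) := by
    have hone : Integrable (fun _ : ℝ => (1:ℝ)) (volume.restrict (Ioc W1 W2)) :=
      integrableOn_const measure_Ioc_lt_top.ne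
    have hmaj : Integrable (fun p : ℝ × ℝ => igG α W1 W2 p.1 * 1)
        ((volume.restrict (Ioi (0:ℝ))).prod (volume.restrict (Ioc W1 W2))) :=
      Integrable.mul_prod (igG_integrableOn α W2 hW1') hone
    simp only [mul_one] at hmaj
    have hmeas : AEStronglyMeasurable
        (fun p : ℝ × ℝ => p.1 ^ (α - 3/2) * ((p.2 * p.1 - 1) * igE p.2 p.1))
        ((volume.restrict (Ioi (0:ℝ))).prod (volume.restrict (Ioc W1 W2))) := by
      rw [Measure.prod_restrict]
      apply ContinuousOn.aestronglyMeasurable _ (measurableSet_Ioi.prod measurableSet_Ioc)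
      apply ContinuousOn.mul
      · exact continuous_fst.continuousOn.rpow_const fun p hp => Or.inl (ne_of_gt hp.1)
      · apply ContinuousOn.mul
        · fun_prop
        · apply Real.continuous_exp.comp_continuousOn
          apply ContinuousOn.div
          · fun_prop
          · fun_prop
          · intro p hp
            have : (0:ℝ) < p.1 := hp.1
            positivity
    refine hmaj.mono' hmeas ?_
    rw [Measure.prod_restrict]
    filter_upwards [self_mem_ae_restrict (measurableSet_Ioi.prod measurableSet_Ioc)] with p hp
    exact igPsi_bound hW1' hp.2.1.le hp.2.2 hp.1
  rw [integral_integral_swap hprod]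
  apply setIntegral_nonneg measurableSet_Ioc
  intro W hW
  exact igPsi_integral_nonneg α h0 (lt_trans hW1' hW.1)
end

section
/- Let Λ be a finite set, W ∈ ℝ^{Λ×Λ} symmetric, β ∈ ℝ^Λ with H_β = 2 diag(β) − W positive definite. Let J̃ ⊆ J ⊆ Λ, set I = Λ\J and Ĩ = Λ\J̃. Defining for any partition Λ = I' ∪ J' the effective weights W^{J'}(β_{I'}) = W_{J'J'} + W_{J'I'}((H_β)_{I'I'})^{-1} W_{I'J'}, one has the semigroup property W^{J̃}(β_{Ĩ}) = (W^J(β_I))^{J̃}(β_{J\J̃}), where the outer restriction operation is applied to the matrix W^J(β_I) with the field β_J on J. -/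
open Matrix Set

attribute [local instance] Classical.propDecidable

/-- Submatrix of `A` with rows in `S` and columns in `T`. -/
def subM {α : Type*} (A : Matrix α α ℝ) (S T : Set α) : Matrix S T ℝ :=
  Matrix.of fun i j => A (i : α) (j : α)

/-- Effective weight matrix `W^J(β_{Jᶜ}) = W_{JJ} + W_{J Jᶜ} ((H_β)_{JᶜJᶜ})⁻¹ W_{Jᶜ J}`,
where `H_β = 2 diag(β) - W`. -/
noncomputable def eff {α : Type*} [Fintype α] [DecidableEq α]
    (A : Matrix α α ℝ) (β : α → ℝ) (J : Set α) : Matrix J J ℝ :=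
  subM A J J +
    subM A J Jᶜ * (subM (2 • Matrix.diagonal β - A) Jᶜ Jᶜ)⁻¹ * subM A Jᶜ J

section Aux

variable {α : Type*} [Fintype α] [DecidableEq α]

lemma sum_dite_set (S : Set α) [Fintype S] (f : S → ℝ) :
    ∑ j : α, (if h : j ∈ S then f ⟨j, h⟩ else 0) = ∑ j : S, f j := by
  rw [← (Equiv.Set.sumCompl S).sum_comp, Fintype.sum_sum_type]
  simp only [Equiv.Set.sumCompl_apply_inl, Equiv.Set.sumCompl_apply_inr]
  have h1 : ∀ j : (S : Set α), (if h : (j : α) ∈ S then f ⟨j, h⟩ else 0) = f j := by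
    intro j; rw [dif_pos j.2]
  have h2 : ∀ j : (Sᶜ : Set α), (if h : (j : α) ∈ S then f ⟨j, h⟩ else 0) = 0 := by
    intro j; rw [dif_neg j.2]
  exact (congrArg₂ (· + ·) (Finset.sum_congr rfl fun j _ => h1 j)
    (Finset.sum_congr rfl fun j _ => h2 j)).trans (by simp)

lemma subM_posDef {H : Matrix α α ℝ} (hH : H.PosDef) (S : Set α) [Fintype S] :
    (subM H S S).PosDef := by
  rw [posDef_iff_dotProduct_mulVec]
  constructor
  · ext i j
    have := congrFun (congrFun hH.1 (i : α)) (j : α)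
    simpa [subM, Matrix.conjTranspose_apply] using this
  · intro x hx
    set y : α → ℝ := fun j => if h : j ∈ S then x ⟨j, h⟩ else 0 with hy
    have hy0 : y ≠ 0 := by
      intro h0
      apply hx
      funext i
      have := congrFun h0 (i : α)
      simpa [hy, i.2] using this
    have hpos := (posDef_iff_dotProduct_mulVec.mp hH).2 hy0
    convert hpos using 1
    have inner : ∀ i : α, (∑ j, H i j * y j) = ∑ j : S, H i (j : α) * x j := by
      intro i
      simp only [hy, mul_dite, mul_zero]
      exact sum_dite_set S (fun j : S => H i (j : α) * x j)
    simp only [star_trivial, dotProduct, mulVec]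
    simp only [inner]
    simp only [subM, Matrix.of_apply]
    rw [← sum_dite_set S (fun i : S => x i * ∑ j : S, H (i : α) (j : α) * x j)]
    congr 1
    funext i
    by_cases h : i ∈ S
    · simp [hy, h, subM]
    · simp [hy, h]

lemma inv_subM {H : Matrix α α ℝ} (hH : H.PosDef) (K : Set α) :
    (subM H⁻¹ K K)⁻¹ =
      subM H K K - subM H K Kᶜ * (subM H Kᶜ Kᶜ)⁻¹ * subM H Kᶜ K := by
  classical
  set A := subM H K K
  set B := subM H K Kᶜ
  set C := subM H Kᶜ K
  set D := subM H Kᶜ Kᶜ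
  let e : (K : Set α) ⊕ (Kᶜ : Set α) ≃ α := Equiv.Set.sumCompl K
  have hM : H.submatrix e e = fromBlocks A B C D := by
    ext i j
    cases i <;> cases j <;> rfl
  have hD : D.PosDef := subM_posDef hH Kᶜ
  haveI iD : Invertible D := invertibleOfIsUnitDet _ (isUnit_iff_ne_zero.mpr hD.det_pos.ne')
  haveI iH : Invertible H := invertibleOfIsUnitDet _ (isUnit_iff_ne_zero.mpr hH.det_pos.ne')
  haveI iHe : Invertible (H.submatrix e e) := H.submatrixEquivInvertible e e
  haveI iFB : Invertible (fromBlocks A B C D) := hM ▸ iHe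
  haveI iS : Invertible (A - B * ⅟D * C) := invertibleOfFromBlocks₂₂Invertible A B C D
  have hinv : ⅟(fromBlocks A B C D) =
      fromBlocks (⅟(A - B * ⅟D * C)) (-(⅟(A - B * ⅟D * C) * B * ⅟D))
        (-(⅟D * C * ⅟(A - B * ⅟D * C))) (⅟D + ⅟D * C * ⅟(A - B * ⅟D * C) * B * ⅟D) :=
    invOf_fromBlocks₂₂_eq A B C D
  have hsub : subM H⁻¹ K K = ⅟(A - B * ⅟D * C) := by
    have h2 : (fromBlocks A B C D)⁻¹ =
        fromBlocks (⅟(A - B * ⅟D * C)) (-(⅟(A - B * ⅟D * C) * B * ⅟D))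
          (-(⅟D * C * ⅟(A - B * ⅟D * C))) (⅟D + ⅟D * C * ⅟(A - B * ⅟D * C) * B * ⅟D) := by
      rw [← invOf_eq_nonsing_inv, hinv]
    have h1 : (H.submatrix e e)⁻¹ = H⁻¹.submatrix e e := Matrix.inv_submatrix_equiv H e e
    have h3 : H⁻¹.submatrix (⇑e) (⇑e) =
        fromBlocks (⅟(A - B * ⅟D * C)) (-(⅟(A - B * ⅟D * C) * B * ⅟D))
          (-(⅟D * C * ⅟(A - B * ⅟D * C))) (⅟D + ⅟D * C * ⅟(A - B * ⅟D * C) * B * ⅟D) := by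
      rw [← h1, hM, h2]
    ext i j
    have := congrFun (congrFun h3 (Sum.inl i)) (Sum.inl j)
    simpa [subM, e, fromBlocks] using this
  rw [hsub]
  have : (A - B * ⅟D * C) * ⅟(A - B * ⅟D * C) = 1 := mul_invOf_self _
  rw [Matrix.inv_eq_left_inv this, invOf_eq_nonsing_inv]

lemma eff_eq (W : Matrix α α ℝ) (β : α → ℝ)
    (hpos : (2 • Matrix.diagonal β - W).PosDef) (K : Set α) :
    eff W β K = 2 • Matrix.diagonal (fun i : K => β i) -
      (subM (2 • Matrix.diagonal β - W)⁻¹ K K)⁻¹ := by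
  rw [inv_subM hpos]
  have h1 : subM (2 • Matrix.diagonal β - W) K K =
      2 • Matrix.diagonal (fun i : K => β i) - subM W K K := by
    ext i j
    by_cases h : i = j
    · subst h; simp [subM, Matrix.diagonal]
    · have h' : (i : α) ≠ (j : α) := fun hc => h (Subtype.ext hc)
      simp [subM, Matrix.diagonal, h, h']
  have h2 : subM (2 • Matrix.diagonal β - W) K Kᶜ = -subM W K Kᶜ := by
    ext i j
    have h' : (i : α) ≠ (j : α) := fun hc => j.2 (hc ▸ i.2)
    simp [subM, Matrix.diagonal, h']
  have h3 : subM (2 • Matrix.diagonal β - W) Kᶜ K = -subM W Kᶜ K := by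
    ext i j
    have h' : (i : α) ≠ (j : α) := fun hc => i.2 (hc ▸ j.2)
    simp [subM, Matrix.diagonal, h']
  rw [h1, h2, h3, eff]
  rw [Matrix.neg_mul, Matrix.neg_mul, Matrix.mul_neg, neg_neg]
  abel

end Aux

theorem eff_semigroup {Λ : Type*} [Fintype Λ] [DecidableEq Λ]
    (W : Matrix Λ Λ ℝ) (hW : W.IsSymm) (β : Λ → ℝ)
    (hpos : (2 • Matrix.diagonal β - W).PosDef)
    (J Jt : Set Λ) (hsub : Jt ⊆ J) :
    ∀ (i j : Λ) (hi : i ∈ Jt) (hj : j ∈ Jt),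
      eff W β Jt ⟨i, hi⟩ ⟨j, hj⟩ =
        eff (eff W β J) (fun x : J => β (x : Λ)) {x : J | (x : Λ) ∈ Jt}
          ⟨⟨i, hsub hi⟩, hi⟩ ⟨⟨j, hsub hj⟩, hj⟩ := by
  classical
  intro i j hi hj
  set H := 2 • Matrix.diagonal β - W with hH
  set β' : J → ℝ := fun x : J => β (x : Λ)
  set K : Set J := {x : J | (x : Λ) ∈ Jt}
  -- the inner Schur matrix
  have hHJ : 2 • Matrix.diagonal β' - eff W β J = (subM H⁻¹ J J)⁻¹ := by
    rw [eff_eq W β hpos J]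
    abel
  have hHJinvpos : (subM H⁻¹ J J).PosDef := subM_posDef hpos.inv J
  have hHJpos : (2 • Matrix.diagonal β' - eff W β J).PosDef := by
    rw [hHJ]; exact hHJinvpos.inv
  -- apply eff_eq on both levels
  have hA := eff_eq W β hpos Jt
  have hB := eff_eq (eff W β J) β' hHJpos K
  -- compute the inverse of the inner Schur matrix
  have hHJinv : (2 • Matrix.diagonal β' - eff W β J)⁻¹ = subM H⁻¹ J J := by
    rw [hHJ]
    exact Matrix.nonsing_inv_nonsing_inv _
      (isUnit_iff_ne_zero.mpr hHJinvpos.det_pos.ne')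
  -- identify the nested submatrix
  let e : K ≃ Jt :=
    { toFun := fun x => ⟨(x : J), x.2⟩
      invFun := fun y => ⟨⟨(y : Λ), hsub y.2⟩, y.2⟩
      left_inv := fun x => by ext; rfl
      right_inv := fun y => by ext; rfl }
  have hnest : subM (subM H⁻¹ J J) K K = (subM H⁻¹ Jt Jt).submatrix e e := by
    ext x y; rfl
  rw [hA, hB, hHJinv, hnest, Matrix.inv_submatrix_equiv]
  simp only [Matrix.sub_apply, Matrix.smul_apply, Matrix.diagonal, Matrix.submatrix_apply]
  have he : e ⟨⟨i, hsub hi⟩, hi⟩ = ⟨i, hi⟩ := rfl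
  have he' : e ⟨⟨j, hsub hj⟩, hj⟩ = ⟨j, hj⟩ := rfl
  rw [he, he']
  congr 1
  simp only [Matrix.of_apply]
  by_cases h : i = j
  · subst h
    simp [β']
  · rw [if_neg, if_neg]
    · exact fun hc => h (congrArg Subtype.val (congrArg Subtype.val hc))
    · exact fun hc => h (congrArg Subtype.val hc)
end

section
/- Let Λ be a finite set, W ∈ [0,∞)^{Λ×Λ} symmetric with the graph on Λ induced by positive entries connected, and β ∈ ℝ^Λ such that H_β = 2diag(β) − W restricted to Λ₋ = Λ\{ρ} is positive definite, for a fixed ρ ∈ Λ. Define u_ρ = 0 and e^{u_{Λ₋}} = ((H_β)_{Λ₋Λ₋})^{-1} W_{Λ₋ρ}. Let ρ ∈ J ⊆ Λ with |J| ≥ 2, I = Λ\J, J₋ = J\{ρ}. Then e^{u_{J₋}} = ((H_{β_J}^{W^J(β_I)})_{J₋J₋})^{-1} (W^J(β_I))_{J₋ρ}, where W^J(β_I) = W_{JJ} + W_{JI}((H_β)_{II})^{-1}W_{IJ} and H_{β_J}^{W^J(β_I)} = 2diag(β_J) − W^J(β_I). -/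
open Matrix Set

attribute [local instance] Classical.propDecidable

lemma posDef_submatrix_equiv' {n m : Type*} [Fintype n] [Fintype m] [DecidableEq n]
    [DecidableEq m] {M : Matrix n n ℝ} (hM : M.PosDef) (e : m ≃ n) :
    (M.submatrix e e).PosDef := by
  refine posDef_iff_dotProduct_mulVec.mpr ⟨?_, ?_⟩
  · ext i j
    simpa [Matrix.conjTranspose_apply] using (congrFun (congrFun hM.1 (e j)) (e i)).symm ▸ rfl
  · intro x hx
    have hx' : x ∘ e.symm ≠ 0 := by
      intro h
      apply hx
      funext i
      simpa using congrFun h (e i)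
    have h2 := hM.dotProduct_mulVec_pos hx'
    have key : star x ⬝ᵥ (M.submatrix e e *ᵥ x) =
        star (x ∘ e.symm) ⬝ᵥ (M *ᵥ (x ∘ e.symm)) := by
      rw [submatrix_mulVec_equiv]
      simp only [dotProduct, Function.comp_apply, Pi.star_apply]
      exact Fintype.sum_equiv e _ _ (fun i => by simp)
    rw [key]; exact h2

/-- Restriction property of the u-field: the vector `e^{u_{Λ₋}}` solving
`(H_β)_{Λ₋Λ₋} e^{u_{Λ₋}} = W_{Λ₋ρ}` on `Λ₋ = Λ \ {ρ}`, restricted to `J₋ = J \ {ρ}`,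
equals the analogous vector computed on `J` from the effective weights
`W^J(β_I) = W_{JJ} + W_{JI}((H_β)_{II})⁻¹ W_{IJ}` with
`H_{β_J}^{W^J(β_I)} = 2 diag(β_J) − W^J(β_I)`. -/
theorem u_field_restriction {Λ : Type*} [Fintype Λ] [DecidableEq Λ]
    (W : Matrix Λ Λ ℝ) (hsymm : W.IsSymm) (hnn : ∀ i j, 0 ≤ W i j)
    (hconn : (SimpleGraph.fromRel fun i j => 0 < W i j).Connected)
    (ρ : Λ) (β : Λ → ℝ)
    (H : Matrix Λ Λ ℝ) (hH : H = 2 • Matrix.diagonal β - W)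
    (hpos : (subM H {x | x ≠ ρ} {x | x ≠ ρ}).PosDef)
    (eu : {x : Λ | x ≠ ρ} → ℝ)
    (heu : eu = (subM H {x | x ≠ ρ} {x | x ≠ ρ})⁻¹ *ᵥ
      fun i : {x : Λ | x ≠ ρ} => W (i : Λ) ρ)
    (J : Set Λ) (hρJ : ρ ∈ J) (hJ2 : 2 ≤ J.ncard)
    (I : Set Λ) (hI : I = Jᶜ)
    (EW : Matrix J J ℝ)
    (hEW : EW = subM W J J + subM W J I * (subM H I I)⁻¹ * subM W I J)
    (HJ : Matrix J J ℝ)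
    (hHJ : HJ = 2 • Matrix.diagonal (fun j : J => β (j : Λ)) - EW) :
    ∀ (j : Λ) (hjJ : j ∈ J) (hj : j ≠ ρ),
      eu ⟨j, hj⟩ =
        ((subM HJ {x : J | (x : Λ) ≠ ρ} {x : J | (x : Λ) ≠ ρ})⁻¹ *ᵥ
            fun i : {x : J | (x : Λ) ≠ ρ} => EW (i : J) ⟨ρ, hρJ⟩)
          ⟨⟨j, hjJ⟩, hj⟩ := by
  classical
  -- basic facts
  have hIJ : ∀ i : Λ, i ∈ I → i ∉ J := by intro i hi; rw [hI] at hi; exact hi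
  have hIρ : ∀ i : Λ, i ∈ I → i ≠ ρ := fun i hi h => hIJ i hi (h ▸ hρJ)
  have hHab : ∀ a b : Λ, H a b = 2 * Matrix.diagonal β a b - W a b := by
    intro a b
    rw [hH, Matrix.sub_apply, Matrix.smul_apply, nsmul_eq_mul]
    norm_num
  have hHJab : ∀ a b : J, HJ a b = 2 * Matrix.diagonal (fun j : J => β (j : Λ)) a b - EW a b := by
    intro a b
    rw [hHJ, Matrix.sub_apply, Matrix.smul_apply, nsmul_eq_mul]
    norm_num
  have hHoff : ∀ a b : Λ, a ≠ b → H a b = -W a b := by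
    intro a b hab
    rw [hHab, Matrix.diagonal_apply_ne _ hab, mul_zero, zero_sub]
  have hHsym : ∀ a b : Λ, H a b = H b a := by
    intro a b
    have hW : W a b = W b a := (congrFun (congrFun hsymm b) a).symm ▸ rfl
    by_cases h : a = b
    · subst h; rfl
    · rw [hHoff a b h, hHoff b a (Ne.symm h), hW]
  -- blocks
  set M : Matrix {x : Λ | x ≠ ρ} {x : Λ | x ≠ ρ} ℝ := subM H {x | x ≠ ρ} {x | x ≠ ρ} with hM
  set A : Matrix {x : J | (x : Λ) ≠ ρ} {x : J | (x : Λ) ≠ ρ} ℝ :=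
    Matrix.of (fun a b => H ((a : J) : Λ) ((b : J) : Λ)) with hA
  set B : Matrix {x : J | (x : Λ) ≠ ρ} I ℝ :=
    -((subM W J I).submatrix (Subtype.val) id) with hB
  set C : Matrix I {x : J | (x : Λ) ≠ ρ} ℝ :=
    -((subM W I J).submatrix id (Subtype.val)) with hC
  set D : Matrix I I ℝ := subM H I I with hD
  -- the equivalence
  let f : {x : J | (x : Λ) ≠ ρ} ⊕ I → {x : Λ | x ≠ ρ} :=
    Sum.elim (fun a => ⟨((a : J) : Λ), a.2⟩) (fun i => ⟨(i : Λ), hIρ i i.2⟩)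
  have hfinj : Function.Injective f := by
    rintro (a | i) (b | j) h
    · simp only [f, Sum.elim_inl, Subtype.mk.injEq] at h
      exact congrArg Sum.inl (Subtype.ext (Subtype.ext h))
    · exfalso
      simp only [f, Sum.elim_inl, Sum.elim_inr, Subtype.mk.injEq] at h
      exact hIJ _ j.2 (h ▸ (a : J).2)
    · exfalso
      simp only [f, Sum.elim_inl, Sum.elim_inr, Subtype.mk.injEq] at h
      exact hIJ _ i.2 (h ▸ (b : J).2)
    · simp only [f, Sum.elim_inr, Subtype.mk.injEq] at h
      exact congrArg Sum.inr (Subtype.ext h)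
  have hfsurj : Function.Surjective f := by
    rintro ⟨x, hx⟩
    by_cases hxJ : x ∈ J
    · exact ⟨Sum.inl ⟨⟨x, hxJ⟩, hx⟩, rfl⟩
    · exact ⟨Sum.inr ⟨x, by rw [hI]; exact hxJ⟩, rfl⟩
  let e : ({x : J | (x : Λ) ≠ ρ} ⊕ I) ≃ {x : Λ | x ≠ ρ} :=
    Equiv.ofBijective f ⟨hfinj, hfsurj⟩
  have he : ∀ s, e s = f s := fun s => rfl
  -- block decomposition of M
  have hMe : M.submatrix e e = fromBlocks A B C D := by
    ext s t
    rcases s with a | i <;> rcases t with b | j <;>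
      simp only [Matrix.submatrix_apply, he, f, Sum.elim_inl, Sum.elim_inr,
        fromBlocks_apply₁₁, fromBlocks_apply₁₂, fromBlocks_apply₂₁, fromBlocks_apply₂₂,
        hM, hA, hB, hC, hD, subM, Matrix.of_apply, Matrix.neg_apply, Matrix.submatrix_apply,
        id_eq]
    · exact hHoff _ _ (fun h => hIJ _ j.2 (h ▸ (a : J).2))
    · exact hHoff _ _ (fun h => hIJ _ i.2 (h.symm ▸ (b : J).2))
  -- positive definiteness
  have hFB : (fromBlocks A B C D).PosDef := hMe ▸ posDef_submatrix_equiv' hpos e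
  have hDpos : D.PosDef := by
    refine posDef_iff_dotProduct_mulVec.mpr ⟨?_, ?_⟩
    · ext i j
      simp only [Matrix.conjTranspose_apply, hD, subM, Matrix.of_apply, star_trivial]
      exact hHsym _ _
    · intro v hv
      have hvne : (Sum.elim (0 : {x : J | (x : Λ) ≠ ρ} → ℝ) v) ≠ 0 := by
        intro h
        apply hv
        funext i
        simpa using congrFun h (Sum.inr i)
      have := hFB.dotProduct_mulVec_pos hvne
      simpa [Matrix.fromBlocks_mulVec, sumElim_dotProduct_sumElim] using this
  have hDdet : IsUnit D.det := hDpos.det_pos.ne'.isUnit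
  haveI : Invertible D := D.invertibleOfIsUnitDet hDdet
  have hMdet : IsUnit M.det := hpos.det_pos.ne'.isUnit
  -- Schur complement determinant
  have hdet1 : (fromBlocks A B C D).det = M.det := by
    rw [← hMe, det_submatrix_equiv_self]
  have hdet2 : (fromBlocks A B C D).det = D.det * (A - B * D⁻¹ * C).det := by
    rw [det_fromBlocks₂₂, invOf_eq_nonsing_inv]
  have hSdet' : IsUnit (A - B * D⁻¹ * C).det := by
    have : D.det * (A - B * D⁻¹ * C).det ≠ 0 := by
      rw [← hdet2, hdet1]; exact hMdet.ne_zero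
    exact isUnit_iff_ne_zero.mpr (right_ne_zero_of_mul this)
  -- S equals the Schur complement
  have hS : subM HJ {x : J | (x : Λ) ≠ ρ} {x : J | (x : Λ) ≠ ρ} = A - B * D⁻¹ * C := by
    have hBDC : B * D⁻¹ * C =
        ((subM W J I) * D⁻¹ * (subM W I J)).submatrix
          (Subtype.val : {x : J | (x : Λ) ≠ ρ} → J) (Subtype.val) := by
      simp only [hB, hC, Matrix.neg_mul, Matrix.mul_neg, neg_neg]
      rw [Matrix.submatrix_mul _ _ _ (id : I → I) _ Function.bijective_id,
        Matrix.submatrix_mul _ _ _ (id : I → I) _ Function.bijective_id]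
      simp
    ext a b
    have hdiag : Matrix.diagonal (fun j : J => β (j : Λ)) (a : J) (b : J) =
        Matrix.diagonal β ((a : J) : Λ) ((b : J) : Λ) := by
      by_cases h : (a : J) = (b : J)
      · rw [h, Matrix.diagonal_apply_eq, Matrix.diagonal_apply_eq]
      · rw [Matrix.diagonal_apply_ne _ h,
          Matrix.diagonal_apply_ne _ (fun hh => h (Subtype.ext hh))]
    show HJ (a : J) (b : J) = (A - B * D⁻¹ * C) a b
    rw [Matrix.sub_apply, hBDC, Matrix.submatrix_apply, hHJab, hEW, Matrix.add_apply, hdiag]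
    have hAab : A a b = H ((a : J) : Λ) ((b : J) : Λ) := rfl
    have hWab : subM W J J (a : J) (b : J) = W ((a : J) : Λ) ((b : J) : Λ) := rfl
    rw [hAab, hWab, hHab]
    ring
  -- vectors
  set x : {x : J | (x : Λ) ≠ ρ} → ℝ := fun a => eu ⟨((a : J) : Λ), a.2⟩ with hx
  set y : I → ℝ := fun i => eu ⟨(i : Λ), hIρ i i.2⟩ with hy
  set wJ : {x : J | (x : Λ) ≠ ρ} → ℝ := fun a => W ((a : J) : Λ) ρ with hwJ
  set wI : I → ℝ := fun i => W (i : Λ) ρ with hwI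
  have hMeu : M *ᵥ eu = fun i : {x : Λ | x ≠ ρ} => W (i : Λ) ρ := by
    rw [heu, mulVec_mulVec, Matrix.mul_nonsing_inv _ hMdet, one_mulVec]
  have hcomp : Sum.elim x y = eu ∘ ⇑e := by
    funext s; rcases s with a | i <;> rfl
  have hFBeq : fromBlocks A B C D *ᵥ (Sum.elim x y) = Sum.elim wJ wI := by
    rw [← hMe, submatrix_mulVec_equiv]
    have h4 : Sum.elim x y ∘ ⇑e.symm = eu := by
      funext k
      rw [Function.comp_apply, hcomp, Function.comp_apply, Equiv.apply_symm_apply]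
    rw [h4, hMeu]
    funext s; rcases s with a | i <;> rfl
  rw [fromBlocks_mulVec] at hFBeq
  have h1 : A *ᵥ x + B *ᵥ y = wJ := by
    funext a
    have := congrFun hFBeq (Sum.inl a)
    simpa using this
  have h2 : C *ᵥ x + D *ᵥ y = wI := by
    funext i
    have := congrFun hFBeq (Sum.inr i)
    simpa using this
  have hyval : y = D⁻¹ *ᵥ wI - D⁻¹ *ᵥ (C *ᵥ x) := by
    have hDy : D *ᵥ y = wI - C *ᵥ x := by
      rw [← h2]; abel
    have : D⁻¹ *ᵥ (D *ᵥ y) = D⁻¹ *ᵥ (wI - C *ᵥ x) := by rw [hDy]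
    rw [mulVec_mulVec, Matrix.nonsing_inv_mul _ hDdet, one_mulVec, mulVec_sub] at this
    exact this
  -- the key equation
  set r : {x : J | (x : Λ) ≠ ρ} → ℝ := fun a => EW (a : J) ⟨ρ, hρJ⟩ with hr
  have h3 : ((subM W J I).submatrix (Subtype.val) id) * D⁻¹ =
      ((subM W J I) * D⁻¹).submatrix
        (Subtype.val : {x : J | (x : Λ) ≠ ρ} → J) id := by
    rw [Matrix.submatrix_mul _ _ _ (id : I → I) _ Function.bijective_id]
    simp
  have hrval : r = wJ - B *ᵥ (D⁻¹ *ᵥ wI) := by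
    funext a
    have hPv : B *ᵥ (D⁻¹ *ᵥ wI) =
        -((((subM W J I) * D⁻¹).submatrix
            (Subtype.val : {x : J | (x : Λ) ≠ ρ} → J) id) *ᵥ wI) := by
      rw [mulVec_mulVec, hB, Matrix.neg_mul, h3, Matrix.neg_mulVec]
    rw [hPv, Pi.sub_apply, Pi.neg_apply, sub_neg_eq_add]
    simp only [hr]
    rw [hEW, Matrix.add_apply]
    congr 1
  have hSx : (A - B * D⁻¹ * C) *ᵥ x = r := by
    rw [Matrix.sub_mulVec]
    have hAx : A *ᵥ x = wJ - B *ᵥ y := by rw [← h1]; abel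
    rw [hAx, hyval, hrval]
    rw [mulVec_sub, ← Matrix.mulVec_mulVec, ← Matrix.mulVec_mulVec]
    abel
  -- finish
  intro j hjJ hj
  have hxval : x = (subM HJ {x : J | (x : Λ) ≠ ρ} {x : J | (x : Λ) ≠ ρ})⁻¹ *ᵥ r := by
    rw [hS, ← hSx, mulVec_mulVec, Matrix.nonsing_inv_mul _ (hS ▸ hSdet'), one_mulVec]
  exact congrFun hxval ⟨⟨j, hjJ⟩, hj⟩
end
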